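/- Suppose q is a rational prime and u is an integer with 0 < u < q. If q ∉ {2, 3}, then there exists a prime p₀ < 3·log q such that gcd(p₀, u) = 1. If q ∉ {2, 3, 7}, then there exists a prime p₀ < 2.1·log q such that gcd(p₀, u) = 1. -/

import Mathlib

set_option maxHeartbeats 4000000

open Finset

/-- Product of all primes `≤ m`. -/
def Pr (m : ℕ) : ℕ := ∏ p ∈ (Finset.range (m+1)).filter Nat.Prime, p


/-- Primorial: product of all primes ≤ m. -/

lemma Pr_mono {a b : ℕ} (h : a ≤ b) : Pr a ≤ Pr b := by
  apply Finset.prod_le_prod_of_subset_of_one_le'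
  · exact Finset.filter_subset_filter _ (Finset.range_subset_range.2 (by omega))
  · intro i hi _
    exact (Finset.mem_filter.1 hi).2.one_lt.le

lemma Pr_pos (m : ℕ) : 0 < Pr m := by
  apply Finset.prod_pos
  intro i hi
  exact (Finset.mem_filter.1 hi).2.pos

lemma stepP {a b N M : ℕ} (hb : Nat.Prime b) (hab : a < b) (h : N ≤ Pr a) (h2 : M ≤ N * b) :
    M ≤ Pr b := by
  have hbn : b ∉ (Finset.range b).filter Nat.Prime := by simp
  have hPr : Pr b = (∏ p ∈ (Finset.range b).filter Nat.Prime, p) * b := by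
    rw [Pr, Finset.range_add_one, Finset.filter_insert, if_pos hb, Finset.prod_insert hbn, mul_comm]
  have h3 : Pr a ≤ ∏ p ∈ (Finset.range b).filter Nat.Prime, p := by
    apply Finset.prod_le_prod_of_subset_of_one_le'
    · exact Finset.filter_subset_filter _ (Finset.range_subset_range.2 (by omega))
    · intro i hi _; exact (Finset.mem_filter.1 hi).2.one_lt.le
  calc M ≤ N * b := h2
    _ ≤ Pr a * b := Nat.mul_le_mul_right b h
    _ ≤ _ := by rw [hPr]; exact Nat.mul_le_mul_right b h3

lemma reduce {X Y : ℕ} (A : ℕ) (hXY : X ≤ Y) (h : 68^Y ≤ 25^Y * A) : 68^X ≤ 25^X * A := by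
  have hd : Y = X + (Y - X) := by omega
  rw [hd, pow_add, pow_add] at h
  have h2 : (25:ℕ)^(Y-X) ≤ 68^(Y-X) := Nat.pow_le_pow_left (by norm_num) _
  have h3 : 68^X * 68^(Y-X) ≤ (25^X * A) * 68^(Y-X) := by
    calc 68^X * 68^(Y-X) ≤ 25^X * 25^(Y-X) * A := h
      _ ≤ 25^X * 68^(Y-X) * A := by gcongr
      _ = (25^X * A) * 68^(Y-X) := by ring
  exact Nat.le_of_mul_le_mul_right h3 (Nat.pow_pos (by norm_num))

lemma checkE {p p' N m : ℕ} (hN : N ≤ Pr p) (hnum : 68^(10*p') ≤ 25^(10*p') * N^21)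
    (h1 : p ≤ m) (h2 : m+1 ≤ p') : 68^(10*(m+1)) ≤ 25^(10*(m+1)) * Pr m ^ 21 := by
  apply reduce _ (show 10*(m+1) ≤ 10*p' by omega)
  refine le_trans hnum ?_
  gcongr
  exact hN.trans (Pr_mono h1)

lemma check' {p p' k c m : ℕ} (hk : 2^k ≤ Pr p) (hc : 10*p' ≤ 25*c) (hkc : 37*c ≤ 21*k)
    (h1 : p ≤ m) (h2 : m+1 ≤ p') : 68^(10*(m+1)) ≤ 25^(10*(m+1)) * Pr m ^ 21 := by
  apply reduce _ (show 10*(m+1) ≤ 25*c by omega)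
  calc (68:ℕ)^(25*c) = (68^25)^c := by rw [← pow_mul]
    _ ≤ ((25:ℕ)^25 * 2^37)^c := Nat.pow_le_pow_left (by norm_num) c
    _ = 25^(25*c) * 2^(37*c) := by rw [mul_pow, ← pow_mul, ← pow_mul]
    _ ≤ 25^(25*c) * Pr m ^ 21 := by
        apply mul_le_mul_right
        calc (2:ℕ)^(37*c) ≤ 2^(21*k) := Nat.pow_le_pow_right (by norm_num) hkc
          _ = (2^k)^21 := by rw [← pow_mul, Nat.mul_comm]
          _ ≤ Pr m ^ 21 := Nat.pow_le_pow_left (hk.trans (Pr_mono h1)) 21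


lemma binom_le (n : ℕ) (hn : 2 ≤ n) :
    Nat.centralBinom n ≤ (2*n)^(Nat.sqrt (2*n) - 1) * Pr (2*n) := by
  set s := Nat.sqrt (2*n) with hs
  set B := Nat.centralBinom n with hBdef
  have hB : B ≠ 0 := Nat.centralBinom_ne_zero n
  have hchoose : B = (2*n).choose n := Nat.centralBinom_eq_two_mul_choose n
  have hfac : ∀ p : ℕ, p ^ B.factorization p ≤ 2*n := by
    intro p
    rw [hchoose]
    exact Nat.pow_factorization_choose_le (by omega)
  set P := (Finset.range (2*n+1)).filter Nat.Prime with hP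
  have hsub : B.factorization.support ⊆ P := by
    intro p hp
    have hpp : p.Prime := Nat.prime_of_mem_primeFactors (by rwa [← Nat.support_factorization])
    have hp1 : 1 ≤ B.factorization p := by
      have := Finsupp.mem_support_iff.1 hp
      omega
    have hple : p ≤ 2*n := by
      calc p = p ^ 1 := (pow_one p).symm
        _ ≤ p ^ B.factorization p := Nat.pow_le_pow_right hpp.pos hp1
        _ ≤ 2*n := hfac p
    simp [hP, Finset.mem_filter, Finset.mem_range]
    exact ⟨by omega, hpp⟩
  have hEq : B = ∏ p ∈ P, p ^ B.factorization p := by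
    conv_lhs => rw [← Nat.factorization_prod_pow_eq_self hB]
    rw [Finsupp.prod]
    exact Finset.prod_subset hsub (fun x _ hx => by
      rw [Finsupp.notMem_support_iff.1 hx, pow_zero])
  rw [hEq, ← Finset.prod_filter_mul_prod_filter_not P (· ≤ s)]
  have h1 : ∏ p ∈ P.filter (· ≤ s), p ^ B.factorization p ≤ (2*n)^(s - 1) := by
    calc ∏ p ∈ P.filter (· ≤ s), p ^ B.factorization p
        ≤ ∏ _p ∈ P.filter (· ≤ s), (2*n) := Finset.prod_le_prod' (fun i _ => hfac i)
      _ = (2*n) ^ (P.filter (· ≤ s)).card := Finset.prod_const _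
      _ ≤ (2*n) ^ (s - 1) := by
          apply Nat.pow_le_pow_right (by omega)
          have hsub2 : P.filter (· ≤ s) ⊆ Finset.Icc 2 s := by
            intro x hx
            simp only [hP, Finset.mem_filter, Finset.mem_range] at hx
            exact Finset.mem_Icc.2 ⟨hx.1.2.two_le, hx.2⟩
          calc (P.filter (· ≤ s)).card ≤ (Finset.Icc 2 s).card := Finset.card_le_card hsub2
            _ = s - 1 := by rw [Nat.card_Icc]; omega
  have h2 : ∏ p ∈ P.filter (¬ · ≤ s), p ^ B.factorization p ≤ Pr (2*n) := by
    calc ∏ p ∈ P.filter (¬ · ≤ s), p ^ B.factorization p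
        ≤ ∏ p ∈ P.filter (¬ · ≤ s), p := by
          apply Finset.prod_le_prod' (fun i hi => ?_)
          simp only [hP, Finset.mem_filter, Finset.mem_range] at hi
          have hle1 : B.factorization i ≤ 1 := by
            rw [hchoose]
            apply Nat.factorization_choose_le_one
            have : s < i := by omega
            calc 2*n < (s+1)^2 := by
                  have := Nat.lt_succ_sqrt' (2*n); rw [← hs] at this; exact this
              _ ≤ i^2 := Nat.pow_le_pow_left (by omega) 2
          calc i ^ B.factorization i ≤ i ^ 1 := Nat.pow_le_pow_right hi.1.2.pos hle1
            _ = i := pow_one i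
      _ ≤ Pr (2*n) := by
          apply Finset.prod_le_prod_of_subset_of_one_le' (Finset.filter_subset _ _)
          intro i hi _
          exact (Finset.mem_filter.1 hi).2.one_lt.le
  exact Nat.mul_le_mul h1 h2

lemma pow2log : ∀ l, 11 ≤ l → (33*l+40)^2 ≤ 100 * 2^l := by
  intro l hl
  induction l, hl using Nat.le_induction with
  | base => norm_num
  | succ l hl ih =>
      have h1 : (33*(l+1)+40)^2 ≤ 2*(33*l+40)^2 := by nlinarith
      calc (33*(l+1)+40)^2 ≤ 2*(33*l+40)^2 := h1
        _ ≤ 2*(100 * 2^l) := by omega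
        _ = 100 * 2^(l+1) := by ring


lemma Easym (n : ℕ) (hn : 1024 ≤ n) : 68^(20*n+20) ≤ 25^(20*n+20) * Pr (2*n) ^ 21 := by
  set s := Nat.sqrt (2*n) with hs
  set l := Nat.log 2 (2*n) with hl
  have hcb : 4^n < n * Nat.centralBinom n := Nat.four_pow_lt_mul_centralBinom n (by omega)
  have hbin := binom_le n (by omega)
  have hn2l : n ≤ 2^l := by
    have h := Nat.lt_pow_succ_log_self (show 1 < 2 by norm_num) (2*n)
    rw [← hl] at h
    rw [pow_succ] at h
    omega
  have h2nl : 2*n ≤ 2^(l+1) := by rw [pow_succ]; omega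
  have h3 : 4^n ≤ 2^l * (2^(l+1))^(s-1) * Pr (2*n) := by
    calc (4:ℕ)^n ≤ n * Nat.centralBinom n := hcb.le
      _ ≤ n * ((2*n)^(s - 1) * Pr (2*n)) := Nat.mul_le_mul_left n hbin
      _ = n * (2*n)^(s-1) * Pr (2*n) := by ring
      _ ≤ 2^l * (2^(l+1))^(s-1) * Pr (2*n) := by
          apply Nat.mul_le_mul_right
          exact Nat.mul_le_mul hn2l (Nat.pow_le_pow_left h2nl _)
  set E := l + (l+1)*(s-1) with hE
  have h4 : 4^n ≤ 2^E * Pr (2*n) := by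
    calc (4:ℕ)^n ≤ 2^l * (2^(l+1))^(s-1) * Pr (2*n) := h3
      _ = 2^E * Pr (2*n) := by conv_rhs => rw [hE, pow_add, pow_mul]
  have hs45 : 45 ≤ s := by
    rw [hs]; exact Nat.le_sqrt.2 (by omega)
  have hl11 : 11 ≤ l := by
    rw [hl]
    exact (Nat.le_log_iff_pow_le (by norm_num) (by omega)).2 (by norm_num; omega)
  have hsq : s*s ≤ 2*n := by rw [hs]; exact Nat.sqrt_le (2*n)
  have hsl : 33*l + 31 ≤ 10*s := by
    have h100 : (33*l+40)^2 ≤ 100*2^l := pow2log l hl11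
    have hself : 2^l ≤ 2*n := by
      rw [hl]; exact Nat.pow_log_le_self 2 (by omega)
    have hlt : 2*n < (s+1)*(s+1) := by
      have := Nat.lt_succ_sqrt (2*n); rw [← hs] at this; exact this
    nlinarith
  obtain ⟨t, ht⟩ : ∃ t, s = t + 1 := ⟨s - 1, by omega⟩
  have hEbound : 21*E + 29 ≤ 13*n := by
    rw [hE, ht]
    simp only [Nat.add_sub_cancel]
    have ht44 : 44 ≤ t := by omega
    have hsq' : (t+1)*(t+1) ≤ 2*n := by rw [ht] at hsq; exact hsq
    have hsl' : 33*l + 31 ≤ 10*(t+1) := by rw [ht] at hsl; exact hsl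
    nlinarith [mul_le_mul_left hsl' (t+1), hsq', ht44, Nat.mul_le_mul ht44 ht44]
  -- main chain
  have h5 : 4^(21*n) ≤ 2^(21*E) * Pr (2*n)^21 := by
    calc (4:ℕ)^(21*n) = (4^n)^21 := by rw [← pow_mul, Nat.mul_comm]
      _ ≤ (2^E * Pr (2*n))^21 := Nat.pow_le_pow_left h4 21
      _ = 2^(21*E) * Pr (2*n)^21 := by rw [mul_pow, ← pow_mul, Nat.mul_comm E 21]
  have hgoal_eq : (68:ℕ)^(20*n+20) = (68^20)^n * 68^20 := by rw [pow_add, pow_mul]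
  have h25eq : (25:ℕ)^(20*n+20) = (25^20)^n * 25^20 := by rw [pow_add, pow_mul]
  have key : (68^20)^n * 68^20 * 2^(21*E) ≤ ((25^20)^n * 25^20 * Pr (2*n)^21) * 2^(21*E) := by
    calc (68^20)^n * 68^20 * 2^(21*E)
        ≤ (68^20)^n * (25^20 * 2^29) * 2^(21*E) := by
          apply Nat.mul_le_mul_right
          apply mul_le_mul_right
          norm_num
      _ = 25^20 * ((68^20)^n * (2^29 * 2^(21*E))) := by ring
      _ ≤ 25^20 * ((68^20)^n * (2^13)^n) := by
          apply mul_le_mul_right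
          apply mul_le_mul_right
          calc (2:ℕ)^29 * 2^(21*E) = 2^(29+21*E) := (pow_add 2 29 (21*E)).symm
            _ ≤ 2^(13*n) := Nat.pow_le_pow_right (by norm_num) (by omega)
            _ = (2^13)^n := pow_mul 2 13 n
      _ = 25^20 * (68^20 * 2^13)^n := by rw [← mul_pow]
      _ ≤ 25^20 * (4^21 * 25^20)^n := by
          apply mul_le_mul_right
          exact Nat.pow_le_pow_left (by norm_num) n
      _ = 25^20 * ((4^21)^n * (25^20)^n) := by rw [mul_pow]
      _ ≤ 25^20 * ((2^(21*E) * Pr (2*n)^21) * (25^20)^n) := by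
          apply mul_le_mul_right
          apply Nat.mul_le_mul_right
          calc ((4:ℕ)^21)^n = 4^(21*n) := (pow_mul 4 21 n).symm
            _ ≤ 2^(21*E) * Pr (2*n)^21 := h5
      _ = ((25^20)^n * 25^20 * Pr (2*n)^21) * 2^(21*E) := by ring
  rw [hgoal_eq, h25eq]
  exact Nat.le_of_mul_le_mul_right key (Nat.pow_pos (by norm_num))

lemma Lasym (m : ℕ) (hm : 2048 ≤ m) : 68^(10*(m+1)) ≤ 25^(10*(m+1)) * Pr m ^ 21 := by
  set n := m / 2 with hn
  have h1 : 1024 ≤ n := by omega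
  have h2 : 2*n ≤ m := by omega
  have h3 : 10*(m+1) ≤ 20*n+20 := by omega
  apply reduce _ h3
  calc (68:ℕ)^(20*n+20) ≤ 25^(20*n+20) * Pr (2*n) ^ 21 := Easym n h1
    _ ≤ 25^(20*n+20) * Pr m ^ 21 := by
        apply mul_le_mul_right
        exact Nat.pow_le_pow_left (Pr_mono h2) 21
lemma prim2 : 2 ≤ Pr 2 := stepP (by norm_num) (by norm_num) (Pr_pos 1) (by norm_num)
lemma prim3 : 6 ≤ Pr 3 := stepP (by norm_num) (by norm_num) prim2 (by norm_num)
lemma prim5 : 30 ≤ Pr 5 := stepP (by norm_num) (by norm_num) prim3 (by norm_num)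
lemma prim7 : 210 ≤ Pr 7 := stepP (by norm_num) (by norm_num) prim5 (by norm_num)
lemma prim11 : 2^11 ≤ Pr 11 := stepP (by norm_num) (by norm_num) prim7 (by norm_num)
lemma prim13 : 2^14 ≤ Pr 13 := stepP (by norm_num) (by norm_num) prim11 (by norm_num)
lemma prim17 : 2^18 ≤ Pr 17 := stepP (by norm_num) (by norm_num) prim13 (by norm_num)
lemma prim19 : 2^22 ≤ Pr 19 := stepP (by norm_num) (by norm_num) prim17 (by norm_num)
lemma prim23 : 2^26 ≤ Pr 23 := stepP (by norm_num) (by norm_num) prim19 (by norm_num)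
lemma prim29 : 2^30 ≤ Pr 29 := stepP (by norm_num) (by norm_num) prim23 (by norm_num)
lemma prim31 : 2^34 ≤ Pr 31 := stepP (by norm_num) (by norm_num) prim29 (by norm_num)
lemma prim37 : 2^39 ≤ Pr 37 := stepP (by norm_num) (by norm_num) prim31 (by norm_num)
lemma prim41 : 2^44 ≤ Pr 41 := stepP (by norm_num) (by norm_num) prim37 (by norm_num)
lemma prim43 : 2^49 ≤ Pr 43 := stepP (by norm_num) (by norm_num) prim41 (by norm_num)
lemma prim47 : 2^54 ≤ Pr 47 := stepP (by norm_num) (by norm_num) prim43 (by norm_num)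
lemma prim53 : 2^59 ≤ Pr 53 := stepP (by norm_num) (by norm_num) prim47 (by norm_num)
lemma prim59 : 2^64 ≤ Pr 59 := stepP (by norm_num) (by norm_num) prim53 (by norm_num)
lemma prim61 : 2^69 ≤ Pr 61 := stepP (by norm_num) (by norm_num) prim59 (by norm_num)
lemma prim67 : 2^75 ≤ Pr 67 := stepP (by norm_num) (by norm_num) prim61 (by norm_num)
lemma prim71 : 2^81 ≤ Pr 71 := stepP (by norm_num) (by norm_num) prim67 (by norm_num)
lemma prim73 : 2^87 ≤ Pr 73 := stepP (by norm_num) (by norm_num) prim71 (by norm_num)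
lemma prim79 : 2^93 ≤ Pr 79 := stepP (by norm_num) (by norm_num) prim73 (by norm_num)
lemma prim83 : 2^99 ≤ Pr 83 := stepP (by norm_num) (by norm_num) prim79 (by norm_num)
lemma prim89 : 2^105 ≤ Pr 89 := stepP (by norm_num) (by norm_num) prim83 (by norm_num)
lemma prim97 : 2^111 ≤ Pr 97 := stepP (by norm_num) (by norm_num) prim89 (by norm_num)
lemma prim101 : 2^117 ≤ Pr 101 := stepP (by norm_num) (by norm_num) prim97 (by norm_num)
lemma prim103 : 2^123 ≤ Pr 103 := stepP (by norm_num) (by norm_num) prim101 (by norm_num)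
lemma prim107 : 2^129 ≤ Pr 107 := stepP (by norm_num) (by norm_num) prim103 (by norm_num)
lemma prim109 : 2^135 ≤ Pr 109 := stepP (by norm_num) (by norm_num) prim107 (by norm_num)
lemma prim113 : 2^141 ≤ Pr 113 := stepP (by norm_num) (by norm_num) prim109 (by norm_num)
lemma prim127 : 2^147 ≤ Pr 127 := stepP (by norm_num) (by norm_num) prim113 (by norm_num)
lemma prim131 : 2^154 ≤ Pr 131 := stepP (by norm_num) (by norm_num) prim127 (by norm_num)
lemma prim137 : 2^161 ≤ Pr 137 := stepP (by norm_num) (by norm_num) prim131 (by norm_num)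
lemma prim139 : 2^168 ≤ Pr 139 := stepP (by norm_num) (by norm_num) prim137 (by norm_num)
lemma prim149 : 2^175 ≤ Pr 149 := stepP (by norm_num) (by norm_num) prim139 (by norm_num)
lemma prim151 : 2^182 ≤ Pr 151 := stepP (by norm_num) (by norm_num) prim149 (by norm_num)
lemma prim157 : 2^189 ≤ Pr 157 := stepP (by norm_num) (by norm_num) prim151 (by norm_num)
lemma prim163 : 2^196 ≤ Pr 163 := stepP (by norm_num) (by norm_num) prim157 (by norm_num)
lemma prim167 : 2^203 ≤ Pr 167 := stepP (by norm_num) (by norm_num) prim163 (by norm_num)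
lemma prim173 : 2^210 ≤ Pr 173 := stepP (by norm_num) (by norm_num) prim167 (by norm_num)
lemma prim179 : 2^217 ≤ Pr 179 := stepP (by norm_num) (by norm_num) prim173 (by norm_num)
lemma prim181 : 2^224 ≤ Pr 181 := stepP (by norm_num) (by norm_num) prim179 (by norm_num)
lemma prim191 : 2^231 ≤ Pr 191 := stepP (by norm_num) (by norm_num) prim181 (by norm_num)
lemma prim193 : 2^238 ≤ Pr 193 := stepP (by norm_num) (by norm_num) prim191 (by norm_num)
lemma prim197 : 2^245 ≤ Pr 197 := stepP (by norm_num) (by norm_num) prim193 (by norm_num)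
lemma prim199 : 2^252 ≤ Pr 199 := stepP (by norm_num) (by norm_num) prim197 (by norm_num)
lemma prim211 : 2^259 ≤ Pr 211 := stepP (by norm_num) (by norm_num) prim199 (by decide +kernel)
lemma prim223 : 2^266 ≤ Pr 223 := stepP (by norm_num) (by norm_num) prim211 (by decide +kernel)
lemma prim227 : 2^273 ≤ Pr 227 := stepP (by norm_num) (by norm_num) prim223 (by decide +kernel)
lemma prim229 : 2^280 ≤ Pr 229 := stepP (by norm_num) (by norm_num) prim227 (by decide +kernel)
lemma prim233 : 2^287 ≤ Pr 233 := stepP (by norm_num) (by norm_num) prim229 (by decide +kernel)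
lemma prim239 : 2^294 ≤ Pr 239 := stepP (by norm_num) (by norm_num) prim233 (by decide +kernel)
lemma prim241 : 2^301 ≤ Pr 241 := stepP (by norm_num) (by norm_num) prim239 (by decide +kernel)
lemma prim251 : 2^308 ≤ Pr 251 := stepP (by norm_num) (by norm_num) prim241 (by decide +kernel)
lemma prim257 : 2^316 ≤ Pr 257 := stepP (by norm_num) (by norm_num) prim251 (by decide +kernel)
lemma prim263 : 2^324 ≤ Pr 263 := stepP (by norm_num) (by norm_num) prim257 (by decide +kernel)
lemma prim269 : 2^332 ≤ Pr 269 := stepP (by norm_num) (by norm_num) prim263 (by decide +kernel)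
lemma prim271 : 2^340 ≤ Pr 271 := stepP (by norm_num) (by norm_num) prim269 (by decide +kernel)
lemma prim277 : 2^348 ≤ Pr 277 := stepP (by norm_num) (by norm_num) prim271 (by decide +kernel)
lemma prim281 : 2^356 ≤ Pr 281 := stepP (by norm_num) (by norm_num) prim277 (by decide +kernel)
lemma prim283 : 2^364 ≤ Pr 283 := stepP (by norm_num) (by norm_num) prim281 (by decide +kernel)
lemma prim293 : 2^372 ≤ Pr 293 := stepP (by norm_num) (by norm_num) prim283 (by decide +kernel)
lemma prim307 : 2^380 ≤ Pr 307 := stepP (by norm_num) (by norm_num) prim293 (by decide +kernel)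
lemma prim311 : 2^388 ≤ Pr 311 := stepP (by norm_num) (by norm_num) prim307 (by decide +kernel)
lemma prim313 : 2^396 ≤ Pr 313 := stepP (by norm_num) (by norm_num) prim311 (by decide +kernel)
lemma prim317 : 2^404 ≤ Pr 317 := stepP (by norm_num) (by norm_num) prim313 (by decide +kernel)
lemma prim331 : 2^412 ≤ Pr 331 := stepP (by norm_num) (by norm_num) prim317 (by decide +kernel)
lemma prim337 : 2^420 ≤ Pr 337 := stepP (by norm_num) (by norm_num) prim331 (by decide +kernel)
lemma prim347 : 2^428 ≤ Pr 347 := stepP (by norm_num) (by norm_num) prim337 (by decide +kernel)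
lemma prim349 : 2^436 ≤ Pr 349 := stepP (by norm_num) (by norm_num) prim347 (by decide +kernel)
lemma prim353 : 2^444 ≤ Pr 353 := stepP (by norm_num) (by norm_num) prim349 (by decide +kernel)
lemma prim359 : 2^452 ≤ Pr 359 := stepP (by norm_num) (by norm_num) prim353 (by decide +kernel)
lemma prim367 : 2^460 ≤ Pr 367 := stepP (by norm_num) (by norm_num) prim359 (by decide +kernel)
lemma prim373 : 2^468 ≤ Pr 373 := stepP (by norm_num) (by norm_num) prim367 (by decide +kernel)
lemma prim379 : 2^476 ≤ Pr 379 := stepP (by norm_num) (by norm_num) prim373 (by decide +kernel)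
lemma prim383 : 2^484 ≤ Pr 383 := stepP (by norm_num) (by norm_num) prim379 (by decide +kernel)
lemma prim389 : 2^492 ≤ Pr 389 := stepP (by norm_num) (by norm_num) prim383 (by decide +kernel)
lemma prim397 : 2^500 ≤ Pr 397 := stepP (by norm_num) (by norm_num) prim389 (by decide +kernel)
lemma prim401 : 2^508 ≤ Pr 401 := stepP (by norm_num) (by norm_num) prim397 (by decide +kernel)
lemma prim409 : 2^516 ≤ Pr 409 := stepP (by norm_num) (by norm_num) prim401 (by decide +kernel)
lemma prim419 : 2^524 ≤ Pr 419 := stepP (by norm_num) (by norm_num) prim409 (by decide +kernel)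
lemma prim421 : 2^532 ≤ Pr 421 := stepP (by norm_num) (by norm_num) prim419 (by decide +kernel)
lemma prim431 : 2^540 ≤ Pr 431 := stepP (by norm_num) (by norm_num) prim421 (by decide +kernel)
lemma prim433 : 2^548 ≤ Pr 433 := stepP (by norm_num) (by norm_num) prim431 (by decide +kernel)
lemma prim439 : 2^556 ≤ Pr 439 := stepP (by norm_num) (by norm_num) prim433 (by decide +kernel)
lemma prim443 : 2^564 ≤ Pr 443 := stepP (by norm_num) (by norm_num) prim439 (by decide +kernel)
lemma prim449 : 2^572 ≤ Pr 449 := stepP (by norm_num) (by norm_num) prim443 (by decide +kernel)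
lemma prim457 : 2^580 ≤ Pr 457 := stepP (by norm_num) (by norm_num) prim449 (by decide +kernel)
lemma prim461 : 2^588 ≤ Pr 461 := stepP (by norm_num) (by norm_num) prim457 (by decide +kernel)
lemma prim463 : 2^596 ≤ Pr 463 := stepP (by norm_num) (by norm_num) prim461 (by decide +kernel)
lemma prim467 : 2^604 ≤ Pr 467 := stepP (by norm_num) (by norm_num) prim463 (by decide +kernel)
lemma prim479 : 2^612 ≤ Pr 479 := stepP (by norm_num) (by norm_num) prim467 (by decide +kernel)
lemma prim487 : 2^620 ≤ Pr 487 := stepP (by norm_num) (by norm_num) prim479 (by decide +kernel)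
lemma prim491 : 2^628 ≤ Pr 491 := stepP (by norm_num) (by norm_num) prim487 (by decide +kernel)
lemma prim499 : 2^636 ≤ Pr 499 := stepP (by norm_num) (by norm_num) prim491 (by decide +kernel)
lemma prim503 : 2^644 ≤ Pr 503 := stepP (by norm_num) (by norm_num) prim499 (by decide +kernel)
lemma prim509 : 2^652 ≤ Pr 509 := stepP (by norm_num) (by norm_num) prim503 (by decide +kernel)
lemma prim521 : 2^661 ≤ Pr 521 := stepP (by norm_num) (by norm_num) prim509 (by decide +kernel)
lemma prim523 : 2^670 ≤ Pr 523 := stepP (by norm_num) (by norm_num) prim521 (by decide +kernel)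
lemma prim541 : 2^679 ≤ Pr 541 := stepP (by norm_num) (by norm_num) prim523 (by decide +kernel)
lemma prim547 : 2^688 ≤ Pr 547 := stepP (by norm_num) (by norm_num) prim541 (by decide +kernel)
lemma prim557 : 2^697 ≤ Pr 557 := stepP (by norm_num) (by norm_num) prim547 (by decide +kernel)
lemma prim563 : 2^706 ≤ Pr 563 := stepP (by norm_num) (by norm_num) prim557 (by decide +kernel)
lemma prim569 : 2^715 ≤ Pr 569 := stepP (by norm_num) (by norm_num) prim563 (by decide +kernel)
lemma prim571 : 2^724 ≤ Pr 571 := stepP (by norm_num) (by norm_num) prim569 (by decide +kernel)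
lemma prim577 : 2^733 ≤ Pr 577 := stepP (by norm_num) (by norm_num) prim571 (by decide +kernel)
lemma prim587 : 2^742 ≤ Pr 587 := stepP (by norm_num) (by norm_num) prim577 (by decide +kernel)
lemma prim593 : 2^751 ≤ Pr 593 := stepP (by norm_num) (by norm_num) prim587 (by decide +kernel)
lemma prim599 : 2^760 ≤ Pr 599 := stepP (by norm_num) (by norm_num) prim593 (by decide +kernel)
lemma prim601 : 2^769 ≤ Pr 601 := stepP (by norm_num) (by norm_num) prim599 (by decide +kernel)
lemma prim607 : 2^778 ≤ Pr 607 := stepP (by norm_num) (by norm_num) prim601 (by decide +kernel)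
lemma prim613 : 2^787 ≤ Pr 613 := stepP (by norm_num) (by norm_num) prim607 (by decide +kernel)
lemma prim617 : 2^796 ≤ Pr 617 := stepP (by norm_num) (by norm_num) prim613 (by decide +kernel)
lemma prim619 : 2^805 ≤ Pr 619 := stepP (by norm_num) (by norm_num) prim617 (by decide +kernel)
lemma prim631 : 2^814 ≤ Pr 631 := stepP (by norm_num) (by norm_num) prim619 (by decide +kernel)
lemma prim641 : 2^823 ≤ Pr 641 := stepP (by norm_num) (by norm_num) prim631 (by decide +kernel)
lemma prim643 : 2^832 ≤ Pr 643 := stepP (by norm_num) (by norm_num) prim641 (by decide +kernel)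
lemma prim647 : 2^841 ≤ Pr 647 := stepP (by norm_num) (by norm_num) prim643 (by decide +kernel)
lemma prim653 : 2^850 ≤ Pr 653 := stepP (by norm_num) (by norm_num) prim647 (by decide +kernel)
lemma prim659 : 2^859 ≤ Pr 659 := stepP (by norm_num) (by norm_num) prim653 (by decide +kernel)
lemma prim661 : 2^868 ≤ Pr 661 := stepP (by norm_num) (by norm_num) prim659 (by decide +kernel)
lemma prim673 : 2^877 ≤ Pr 673 := stepP (by norm_num) (by norm_num) prim661 (by decide +kernel)
lemma prim677 : 2^886 ≤ Pr 677 := stepP (by norm_num) (by norm_num) prim673 (by decide +kernel)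
lemma prim683 : 2^895 ≤ Pr 683 := stepP (by norm_num) (by norm_num) prim677 (by decide +kernel)
lemma prim691 : 2^904 ≤ Pr 691 := stepP (by norm_num) (by norm_num) prim683 (by decide +kernel)
lemma prim701 : 2^913 ≤ Pr 701 := stepP (by norm_num) (by norm_num) prim691 (by decide +kernel)
lemma prim709 : 2^922 ≤ Pr 709 := stepP (by norm_num) (by norm_num) prim701 (by decide +kernel)
lemma prim719 : 2^931 ≤ Pr 719 := stepP (by norm_num) (by norm_num) prim709 (by decide +kernel)
lemma prim727 : 2^940 ≤ Pr 727 := stepP (by norm_num) (by norm_num) prim719 (by decide +kernel)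
lemma prim733 : 2^949 ≤ Pr 733 := stepP (by norm_num) (by norm_num) prim727 (by decide +kernel)
lemma prim739 : 2^958 ≤ Pr 739 := stepP (by norm_num) (by norm_num) prim733 (by decide +kernel)
lemma prim743 : 2^967 ≤ Pr 743 := stepP (by norm_num) (by norm_num) prim739 (by decide +kernel)
lemma prim751 : 2^976 ≤ Pr 751 := stepP (by norm_num) (by norm_num) prim743 (by decide +kernel)
lemma prim757 : 2^985 ≤ Pr 757 := stepP (by norm_num) (by norm_num) prim751 (by decide +kernel)
lemma prim761 : 2^994 ≤ Pr 761 := stepP (by norm_num) (by norm_num) prim757 (by decide +kernel)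
lemma prim769 : 2^1003 ≤ Pr 769 := stepP (by norm_num) (by norm_num) prim761 (by decide +kernel)
lemma prim773 : 2^1012 ≤ Pr 773 := stepP (by norm_num) (by norm_num) prim769 (by decide +kernel)
lemma prim787 : 2^1021 ≤ Pr 787 := stepP (by norm_num) (by norm_num) prim773 (by decide +kernel)
lemma prim797 : 2^1030 ≤ Pr 797 := stepP (by norm_num) (by norm_num) prim787 (by decide +kernel)
lemma prim809 : 2^1039 ≤ Pr 809 := stepP (by norm_num) (by norm_num) prim797 (by decide +kernel)
lemma prim811 : 2^1048 ≤ Pr 811 := stepP (by norm_num) (by norm_num) prim809 (by decide +kernel)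
lemma prim821 : 2^1057 ≤ Pr 821 := stepP (by norm_num) (by norm_num) prim811 (by decide +kernel)
lemma prim823 : 2^1066 ≤ Pr 823 := stepP (by norm_num) (by norm_num) prim821 (by decide +kernel)
lemma prim827 : 2^1075 ≤ Pr 827 := stepP (by norm_num) (by norm_num) prim823 (by decide +kernel)
lemma prim829 : 2^1084 ≤ Pr 829 := stepP (by norm_num) (by norm_num) prim827 (by decide +kernel)
lemma prim839 : 2^1093 ≤ Pr 839 := stepP (by norm_num) (by norm_num) prim829 (by decide +kernel)
lemma prim853 : 2^1102 ≤ Pr 853 := stepP (by norm_num) (by norm_num) prim839 (by decide +kernel)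
lemma prim857 : 2^1111 ≤ Pr 857 := stepP (by norm_num) (by norm_num) prim853 (by decide +kernel)
lemma prim859 : 2^1120 ≤ Pr 859 := stepP (by norm_num) (by norm_num) prim857 (by decide +kernel)
lemma prim863 : 2^1129 ≤ Pr 863 := stepP (by norm_num) (by norm_num) prim859 (by decide +kernel)
lemma prim877 : 2^1138 ≤ Pr 877 := stepP (by norm_num) (by norm_num) prim863 (by decide +kernel)
lemma prim881 : 2^1147 ≤ Pr 881 := stepP (by norm_num) (by norm_num) prim877 (by decide +kernel)
lemma prim883 : 2^1156 ≤ Pr 883 := stepP (by norm_num) (by norm_num) prim881 (by decide +kernel)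
lemma prim887 : 2^1165 ≤ Pr 887 := stepP (by norm_num) (by norm_num) prim883 (by decide +kernel)
lemma prim907 : 2^1174 ≤ Pr 907 := stepP (by norm_num) (by norm_num) prim887 (by decide +kernel)
lemma prim911 : 2^1183 ≤ Pr 911 := stepP (by norm_num) (by norm_num) prim907 (by decide +kernel)
lemma prim919 : 2^1192 ≤ Pr 919 := stepP (by norm_num) (by norm_num) prim911 (by decide +kernel)
lemma prim929 : 2^1201 ≤ Pr 929 := stepP (by norm_num) (by norm_num) prim919 (by decide +kernel)
lemma prim937 : 2^1210 ≤ Pr 937 := stepP (by norm_num) (by norm_num) prim929 (by decide +kernel)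
lemma prim941 : 2^1219 ≤ Pr 941 := stepP (by norm_num) (by norm_num) prim937 (by decide +kernel)
lemma prim947 : 2^1228 ≤ Pr 947 := stepP (by norm_num) (by norm_num) prim941 (by decide +kernel)
lemma prim953 : 2^1237 ≤ Pr 953 := stepP (by norm_num) (by norm_num) prim947 (by decide +kernel)
lemma prim967 : 2^1246 ≤ Pr 967 := stepP (by norm_num) (by norm_num) prim953 (by decide +kernel)
lemma prim971 : 2^1255 ≤ Pr 971 := stepP (by norm_num) (by norm_num) prim967 (by decide +kernel)
lemma prim977 : 2^1264 ≤ Pr 977 := stepP (by norm_num) (by norm_num) prim971 (by decide +kernel)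
lemma prim983 : 2^1273 ≤ Pr 983 := stepP (by norm_num) (by norm_num) prim977 (by decide +kernel)
lemma prim991 : 2^1282 ≤ Pr 991 := stepP (by norm_num) (by norm_num) prim983 (by decide +kernel)
lemma prim997 : 2^1291 ≤ Pr 997 := stepP (by norm_num) (by norm_num) prim991 (by decide +kernel)
lemma prim1009 : 2^1300 ≤ Pr 1009 := stepP (by norm_num) (by norm_num) prim997 (by decide +kernel)
lemma prim1013 : 2^1309 ≤ Pr 1013 := stepP (by norm_num) (by norm_num) prim1009 (by decide +kernel)
lemma prim1019 : 2^1318 ≤ Pr 1019 := stepP (by norm_num) (by norm_num) prim1013 (by decide +kernel)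
lemma prim1021 : 2^1327 ≤ Pr 1021 := stepP (by norm_num) (by norm_num) prim1019 (by decide +kernel)
lemma prim1031 : 2^1337 ≤ Pr 1031 := stepP (by norm_num) (by norm_num) prim1021 (by decide +kernel)
lemma prim1033 : 2^1347 ≤ Pr 1033 := stepP (by norm_num) (by norm_num) prim1031 (by decide +kernel)
lemma prim1039 : 2^1357 ≤ Pr 1039 := stepP (by norm_num) (by norm_num) prim1033 (by decide +kernel)
lemma prim1049 : 2^1367 ≤ Pr 1049 := stepP (by norm_num) (by norm_num) prim1039 (by decide +kernel)
lemma prim1051 : 2^1377 ≤ Pr 1051 := stepP (by norm_num) (by norm_num) prim1049 (by decide +kernel)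
lemma prim1061 : 2^1387 ≤ Pr 1061 := stepP (by norm_num) (by norm_num) prim1051 (by decide +kernel)
lemma prim1063 : 2^1397 ≤ Pr 1063 := stepP (by norm_num) (by norm_num) prim1061 (by decide +kernel)
lemma prim1069 : 2^1407 ≤ Pr 1069 := stepP (by norm_num) (by norm_num) prim1063 (by decide +kernel)
lemma prim1087 : 2^1417 ≤ Pr 1087 := stepP (by norm_num) (by norm_num) prim1069 (by decide +kernel)
lemma prim1091 : 2^1427 ≤ Pr 1091 := stepP (by norm_num) (by norm_num) prim1087 (by decide +kernel)
lemma prim1093 : 2^1437 ≤ Pr 1093 := stepP (by norm_num) (by norm_num) prim1091 (by decide +kernel)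
lemma prim1097 : 2^1447 ≤ Pr 1097 := stepP (by norm_num) (by norm_num) prim1093 (by decide +kernel)
lemma prim1103 : 2^1457 ≤ Pr 1103 := stepP (by norm_num) (by norm_num) prim1097 (by decide +kernel)
lemma prim1109 : 2^1467 ≤ Pr 1109 := stepP (by norm_num) (by norm_num) prim1103 (by decide +kernel)
lemma prim1117 : 2^1477 ≤ Pr 1117 := stepP (by norm_num) (by norm_num) prim1109 (by decide +kernel)
lemma prim1123 : 2^1487 ≤ Pr 1123 := stepP (by norm_num) (by norm_num) prim1117 (by decide +kernel)
lemma prim1129 : 2^1497 ≤ Pr 1129 := stepP (by norm_num) (by norm_num) prim1123 (by decide +kernel)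
lemma prim1151 : 2^1507 ≤ Pr 1151 := stepP (by norm_num) (by norm_num) prim1129 (by decide +kernel)
lemma prim1153 : 2^1517 ≤ Pr 1153 := stepP (by norm_num) (by norm_num) prim1151 (by decide +kernel)
lemma prim1163 : 2^1527 ≤ Pr 1163 := stepP (by norm_num) (by norm_num) prim1153 (by decide +kernel)
lemma prim1171 : 2^1537 ≤ Pr 1171 := stepP (by norm_num) (by norm_num) prim1163 (by decide +kernel)
lemma prim1181 : 2^1547 ≤ Pr 1181 := stepP (by norm_num) (by norm_num) prim1171 (by decide +kernel)
lemma prim1187 : 2^1557 ≤ Pr 1187 := stepP (by norm_num) (by norm_num) prim1181 (by decide +kernel)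
lemma prim1193 : 2^1567 ≤ Pr 1193 := stepP (by norm_num) (by norm_num) prim1187 (by decide +kernel)
lemma prim1201 : 2^1577 ≤ Pr 1201 := stepP (by norm_num) (by norm_num) prim1193 (by decide +kernel)
lemma prim1213 : 2^1587 ≤ Pr 1213 := stepP (by norm_num) (by norm_num) prim1201 (by decide +kernel)
lemma prim1217 : 2^1597 ≤ Pr 1217 := stepP (by norm_num) (by norm_num) prim1213 (by decide +kernel)
lemma prim1223 : 2^1607 ≤ Pr 1223 := stepP (by norm_num) (by norm_num) prim1217 (by decide +kernel)
lemma prim1229 : 2^1617 ≤ Pr 1229 := stepP (by norm_num) (by norm_num) prim1223 (by decide +kernel)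
lemma prim1231 : 2^1627 ≤ Pr 1231 := stepP (by norm_num) (by norm_num) prim1229 (by decide +kernel)
lemma prim1237 : 2^1637 ≤ Pr 1237 := stepP (by norm_num) (by norm_num) prim1231 (by decide +kernel)
lemma prim1249 : 2^1647 ≤ Pr 1249 := stepP (by norm_num) (by norm_num) prim1237 (by decide +kernel)
lemma prim1259 : 2^1657 ≤ Pr 1259 := stepP (by norm_num) (by norm_num) prim1249 (by decide +kernel)
lemma prim1277 : 2^1667 ≤ Pr 1277 := stepP (by norm_num) (by norm_num) prim1259 (by decide +kernel)
lemma prim1279 : 2^1677 ≤ Pr 1279 := stepP (by norm_num) (by norm_num) prim1277 (by decide +kernel)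
lemma prim1283 : 2^1687 ≤ Pr 1283 := stepP (by norm_num) (by norm_num) prim1279 (by decide +kernel)
lemma prim1289 : 2^1697 ≤ Pr 1289 := stepP (by norm_num) (by norm_num) prim1283 (by decide +kernel)
lemma prim1291 : 2^1707 ≤ Pr 1291 := stepP (by norm_num) (by norm_num) prim1289 (by decide +kernel)
lemma prim1297 : 2^1717 ≤ Pr 1297 := stepP (by norm_num) (by norm_num) prim1291 (by decide +kernel)
lemma prim1301 : 2^1727 ≤ Pr 1301 := stepP (by norm_num) (by norm_num) prim1297 (by decide +kernel)
lemma prim1303 : 2^1737 ≤ Pr 1303 := stepP (by norm_num) (by norm_num) prim1301 (by decide +kernel)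
lemma prim1307 : 2^1747 ≤ Pr 1307 := stepP (by norm_num) (by norm_num) prim1303 (by decide +kernel)
lemma prim1319 : 2^1757 ≤ Pr 1319 := stepP (by norm_num) (by norm_num) prim1307 (by decide +kernel)
lemma prim1321 : 2^1767 ≤ Pr 1321 := stepP (by norm_num) (by norm_num) prim1319 (by decide +kernel)
lemma prim1327 : 2^1777 ≤ Pr 1327 := stepP (by norm_num) (by norm_num) prim1321 (by decide +kernel)
lemma prim1361 : 2^1787 ≤ Pr 1361 := stepP (by norm_num) (by norm_num) prim1327 (by decide +kernel)
lemma prim1367 : 2^1797 ≤ Pr 1367 := stepP (by norm_num) (by norm_num) prim1361 (by decide +kernel)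
lemma prim1373 : 2^1807 ≤ Pr 1373 := stepP (by norm_num) (by norm_num) prim1367 (by decide +kernel)
lemma prim1381 : 2^1817 ≤ Pr 1381 := stepP (by norm_num) (by norm_num) prim1373 (by decide +kernel)
lemma prim1399 : 2^1827 ≤ Pr 1399 := stepP (by norm_num) (by norm_num) prim1381 (by decide +kernel)
lemma prim1409 : 2^1837 ≤ Pr 1409 := stepP (by norm_num) (by norm_num) prim1399 (by decide +kernel)
lemma prim1423 : 2^1847 ≤ Pr 1423 := stepP (by norm_num) (by norm_num) prim1409 (by decide +kernel)
lemma prim1427 : 2^1857 ≤ Pr 1427 := stepP (by norm_num) (by norm_num) prim1423 (by decide +kernel)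
lemma prim1429 : 2^1867 ≤ Pr 1429 := stepP (by norm_num) (by norm_num) prim1427 (by decide +kernel)
lemma prim1433 : 2^1877 ≤ Pr 1433 := stepP (by norm_num) (by norm_num) prim1429 (by decide +kernel)
lemma prim1439 : 2^1887 ≤ Pr 1439 := stepP (by norm_num) (by norm_num) prim1433 (by decide +kernel)
lemma prim1447 : 2^1897 ≤ Pr 1447 := stepP (by norm_num) (by norm_num) prim1439 (by decide +kernel)
lemma prim1451 : 2^1907 ≤ Pr 1451 := stepP (by norm_num) (by norm_num) prim1447 (by decide +kernel)
lemma prim1453 : 2^1917 ≤ Pr 1453 := stepP (by norm_num) (by norm_num) prim1451 (by decide +kernel)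
lemma prim1459 : 2^1927 ≤ Pr 1459 := stepP (by norm_num) (by norm_num) prim1453 (by decide +kernel)
lemma prim1471 : 2^1937 ≤ Pr 1471 := stepP (by norm_num) (by norm_num) prim1459 (by decide +kernel)
lemma prim1481 : 2^1947 ≤ Pr 1481 := stepP (by norm_num) (by norm_num) prim1471 (by decide +kernel)
lemma prim1483 : 2^1957 ≤ Pr 1483 := stepP (by norm_num) (by norm_num) prim1481 (by decide +kernel)
lemma prim1487 : 2^1967 ≤ Pr 1487 := stepP (by norm_num) (by norm_num) prim1483 (by decide +kernel)
lemma prim1489 : 2^1977 ≤ Pr 1489 := stepP (by norm_num) (by norm_num) prim1487 (by decide +kernel)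
lemma prim1493 : 2^1987 ≤ Pr 1493 := stepP (by norm_num) (by norm_num) prim1489 (by decide +kernel)
lemma prim1499 : 2^1997 ≤ Pr 1499 := stepP (by norm_num) (by norm_num) prim1493 (by decide +kernel)
lemma prim1511 : 2^2007 ≤ Pr 1511 := stepP (by norm_num) (by norm_num) prim1499 (by decide +kernel)
lemma prim1523 : 2^2017 ≤ Pr 1523 := stepP (by norm_num) (by norm_num) prim1511 (by decide +kernel)
lemma prim1531 : 2^2027 ≤ Pr 1531 := stepP (by norm_num) (by norm_num) prim1523 (by decide +kernel)
lemma prim1543 : 2^2037 ≤ Pr 1543 := stepP (by norm_num) (by norm_num) prim1531 (by decide +kernel)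
lemma prim1549 : 2^2047 ≤ Pr 1549 := stepP (by norm_num) (by norm_num) prim1543 (by decide +kernel)
lemma prim1553 : 2^2057 ≤ Pr 1553 := stepP (by norm_num) (by norm_num) prim1549 (by decide +kernel)
lemma prim1559 : 2^2067 ≤ Pr 1559 := stepP (by norm_num) (by norm_num) prim1553 (by decide +kernel)
lemma prim1567 : 2^2077 ≤ Pr 1567 := stepP (by norm_num) (by norm_num) prim1559 (by decide +kernel)
lemma prim1571 : 2^2087 ≤ Pr 1571 := stepP (by norm_num) (by norm_num) prim1567 (by decide +kernel)
lemma prim1579 : 2^2097 ≤ Pr 1579 := stepP (by norm_num) (by norm_num) prim1571 (by decide +kernel)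
lemma prim1583 : 2^2107 ≤ Pr 1583 := stepP (by norm_num) (by norm_num) prim1579 (by decide +kernel)
lemma prim1597 : 2^2117 ≤ Pr 1597 := stepP (by norm_num) (by norm_num) prim1583 (by decide +kernel)
lemma prim1601 : 2^2127 ≤ Pr 1601 := stepP (by norm_num) (by norm_num) prim1597 (by decide +kernel)
lemma prim1607 : 2^2137 ≤ Pr 1607 := stepP (by norm_num) (by norm_num) prim1601 (by decide +kernel)
lemma prim1609 : 2^2147 ≤ Pr 1609 := stepP (by norm_num) (by norm_num) prim1607 (by decide +kernel)
lemma prim1613 : 2^2157 ≤ Pr 1613 := stepP (by norm_num) (by norm_num) prim1609 (by decide +kernel)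
lemma prim1619 : 2^2167 ≤ Pr 1619 := stepP (by norm_num) (by norm_num) prim1613 (by decide +kernel)
lemma prim1621 : 2^2177 ≤ Pr 1621 := stepP (by norm_num) (by norm_num) prim1619 (by decide +kernel)
lemma prim1627 : 2^2187 ≤ Pr 1627 := stepP (by norm_num) (by norm_num) prim1621 (by decide +kernel)
lemma prim1637 : 2^2197 ≤ Pr 1637 := stepP (by norm_num) (by norm_num) prim1627 (by decide +kernel)
lemma prim1657 : 2^2207 ≤ Pr 1657 := stepP (by norm_num) (by norm_num) prim1637 (by decide +kernel)
lemma prim1663 : 2^2217 ≤ Pr 1663 := stepP (by norm_num) (by norm_num) prim1657 (by decide +kernel)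
lemma prim1667 : 2^2227 ≤ Pr 1667 := stepP (by norm_num) (by norm_num) prim1663 (by decide +kernel)
lemma prim1669 : 2^2237 ≤ Pr 1669 := stepP (by norm_num) (by norm_num) prim1667 (by decide +kernel)
lemma prim1693 : 2^2247 ≤ Pr 1693 := stepP (by norm_num) (by norm_num) prim1669 (by decide +kernel)
lemma prim1697 : 2^2257 ≤ Pr 1697 := stepP (by norm_num) (by norm_num) prim1693 (by decide +kernel)
lemma prim1699 : 2^2267 ≤ Pr 1699 := stepP (by norm_num) (by norm_num) prim1697 (by decide +kernel)
lemma prim1709 : 2^2277 ≤ Pr 1709 := stepP (by norm_num) (by norm_num) prim1699 (by decide +kernel)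
lemma prim1721 : 2^2287 ≤ Pr 1721 := stepP (by norm_num) (by norm_num) prim1709 (by decide +kernel)
lemma prim1723 : 2^2297 ≤ Pr 1723 := stepP (by norm_num) (by norm_num) prim1721 (by decide +kernel)
lemma prim1733 : 2^2307 ≤ Pr 1733 := stepP (by norm_num) (by norm_num) prim1723 (by decide +kernel)
lemma prim1741 : 2^2317 ≤ Pr 1741 := stepP (by norm_num) (by norm_num) prim1733 (by decide +kernel)
lemma prim1747 : 2^2327 ≤ Pr 1747 := stepP (by norm_num) (by norm_num) prim1741 (by decide +kernel)
lemma prim1753 : 2^2337 ≤ Pr 1753 := stepP (by norm_num) (by norm_num) prim1747 (by decide +kernel)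
lemma prim1759 : 2^2347 ≤ Pr 1759 := stepP (by norm_num) (by norm_num) prim1753 (by decide +kernel)
lemma prim1777 : 2^2357 ≤ Pr 1777 := stepP (by norm_num) (by norm_num) prim1759 (by decide +kernel)
lemma prim1783 : 2^2367 ≤ Pr 1783 := stepP (by norm_num) (by norm_num) prim1777 (by decide +kernel)
lemma prim1787 : 2^2377 ≤ Pr 1787 := stepP (by norm_num) (by norm_num) prim1783 (by decide +kernel)
lemma prim1789 : 2^2387 ≤ Pr 1789 := stepP (by norm_num) (by norm_num) prim1787 (by decide +kernel)
lemma prim1801 : 2^2397 ≤ Pr 1801 := stepP (by norm_num) (by norm_num) prim1789 (by decide +kernel)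
lemma prim1811 : 2^2407 ≤ Pr 1811 := stepP (by norm_num) (by norm_num) prim1801 (by decide +kernel)
lemma prim1823 : 2^2417 ≤ Pr 1823 := stepP (by norm_num) (by norm_num) prim1811 (by decide +kernel)
lemma prim1831 : 2^2427 ≤ Pr 1831 := stepP (by norm_num) (by norm_num) prim1823 (by decide +kernel)
lemma prim1847 : 2^2437 ≤ Pr 1847 := stepP (by norm_num) (by norm_num) prim1831 (by decide +kernel)
lemma prim1861 : 2^2447 ≤ Pr 1861 := stepP (by norm_num) (by norm_num) prim1847 (by decide +kernel)
lemma prim1867 : 2^2457 ≤ Pr 1867 := stepP (by norm_num) (by norm_num) prim1861 (by decide +kernel)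
lemma prim1871 : 2^2467 ≤ Pr 1871 := stepP (by norm_num) (by norm_num) prim1867 (by decide +kernel)
lemma prim1873 : 2^2477 ≤ Pr 1873 := stepP (by norm_num) (by norm_num) prim1871 (by decide +kernel)
lemma prim1877 : 2^2487 ≤ Pr 1877 := stepP (by norm_num) (by norm_num) prim1873 (by decide +kernel)
lemma prim1879 : 2^2497 ≤ Pr 1879 := stepP (by norm_num) (by norm_num) prim1877 (by decide +kernel)
lemma prim1889 : 2^2507 ≤ Pr 1889 := stepP (by norm_num) (by norm_num) prim1879 (by decide +kernel)
lemma prim1901 : 2^2517 ≤ Pr 1901 := stepP (by norm_num) (by norm_num) prim1889 (by decide +kernel)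
lemma prim1907 : 2^2527 ≤ Pr 1907 := stepP (by norm_num) (by norm_num) prim1901 (by decide +kernel)
lemma prim1913 : 2^2537 ≤ Pr 1913 := stepP (by norm_num) (by norm_num) prim1907 (by decide +kernel)
lemma prim1931 : 2^2547 ≤ Pr 1931 := stepP (by norm_num) (by norm_num) prim1913 (by decide +kernel)
lemma prim1933 : 2^2557 ≤ Pr 1933 := stepP (by norm_num) (by norm_num) prim1931 (by decide +kernel)
lemma prim1949 : 2^2567 ≤ Pr 1949 := stepP (by norm_num) (by norm_num) prim1933 (by decide +kernel)
lemma prim1951 : 2^2577 ≤ Pr 1951 := stepP (by norm_num) (by norm_num) prim1949 (by decide +kernel)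
lemma prim1973 : 2^2587 ≤ Pr 1973 := stepP (by norm_num) (by norm_num) prim1951 (by decide +kernel)
lemma prim1979 : 2^2597 ≤ Pr 1979 := stepP (by norm_num) (by norm_num) prim1973 (by decide +kernel)
lemma prim1987 : 2^2607 ≤ Pr 1987 := stepP (by norm_num) (by norm_num) prim1979 (by decide +kernel)
lemma prim1993 : 2^2617 ≤ Pr 1993 := stepP (by norm_num) (by norm_num) prim1987 (by decide +kernel)
lemma prim1997 : 2^2627 ≤ Pr 1997 := stepP (by norm_num) (by norm_num) prim1993 (by decide +kernel)
lemma prim1999 : 2^2637 ≤ Pr 1999 := stepP (by norm_num) (by norm_num) prim1997 (by decide +kernel)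
lemma prim2003 : 2^2647 ≤ Pr 2003 := stepP (by norm_num) (by norm_num) prim1999 (by decide +kernel)
lemma prim2011 : 2^2657 ≤ Pr 2011 := stepP (by norm_num) (by norm_num) prim2003 (by decide +kernel)
lemma prim2017 : 2^2667 ≤ Pr 2017 := stepP (by norm_num) (by norm_num) prim2011 (by decide +kernel)
lemma prim2027 : 2^2677 ≤ Pr 2027 := stepP (by norm_num) (by norm_num) prim2017 (by decide +kernel)
lemma prim2029 : 2^2687 ≤ Pr 2029 := stepP (by norm_num) (by norm_num) prim2027 (by decide +kernel)
lemma prim2039 : 2^2697 ≤ Pr 2039 := stepP (by norm_num) (by norm_num) prim2029 (by decide +kernel)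
lemma prim2053 : 2^2708 ≤ Pr 2053 := stepP (by norm_num) (by norm_num) prim2039 (by decide +kernel)
lemma prim2063 : 2^2719 ≤ Pr 2063 := stepP (by norm_num) (by norm_num) prim2053 (by decide +kernel)
lemma prim2069 : 2^2730 ≤ Pr 2069 := stepP (by norm_num) (by norm_num) prim2063 (by decide +kernel)
lemma prim2081 : 2^2741 ≤ Pr 2081 := stepP (by norm_num) (by norm_num) prim2069 (by decide +kernel)
lemma prim2083 : 2^2752 ≤ Pr 2083 := stepP (by norm_num) (by norm_num) prim2081 (by decide +kernel)
lemma prim2087 : 2^2763 ≤ Pr 2087 := stepP (by norm_num) (by norm_num) prim2083 (by decide +kernel)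
lemma prim2089 : 2^2774 ≤ Pr 2089 := stepP (by norm_num) (by norm_num) prim2087 (by decide +kernel)
lemma prim2099 : 2^2785 ≤ Pr 2099 := stepP (by norm_num) (by norm_num) prim2089 (by decide +kernel)
lemma prim2111 : 2^2796 ≤ Pr 2111 := stepP (by norm_num) (by norm_num) prim2099 (by decide +kernel)
lemma prim2113 : 2^2807 ≤ Pr 2113 := stepP (by norm_num) (by norm_num) prim2111 (by decide +kernel)
lemma prim2129 : 2^2818 ≤ Pr 2129 := stepP (by norm_num) (by norm_num) prim2113 (by decide +kernel)
lemma prim2131 : 2^2829 ≤ Pr 2131 := stepP (by norm_num) (by norm_num) prim2129 (by decide +kernel)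
lemma prim2137 : 2^2840 ≤ Pr 2137 := stepP (by norm_num) (by norm_num) prim2131 (by decide +kernel)
lemma prim2141 : 2^2851 ≤ Pr 2141 := stepP (by norm_num) (by norm_num) prim2137 (by decide +kernel)
lemma prim2143 : 2^2862 ≤ Pr 2143 := stepP (by norm_num) (by norm_num) prim2141 (by decide +kernel)
lemma prim2153 : 2^2873 ≤ Pr 2153 := stepP (by norm_num) (by norm_num) prim2143 (by decide +kernel)
lemma prim2161 : 2^2884 ≤ Pr 2161 := stepP (by norm_num) (by norm_num) prim2153 (by decide +kernel)
lemma prim2179 : 2^2895 ≤ Pr 2179 := stepP (by norm_num) (by norm_num) prim2161 (by decide +kernel)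
lemma prim2203 : 2^2906 ≤ Pr 2203 := stepP (by norm_num) (by norm_num) prim2179 (by decide +kernel)
lemma prim2207 : 2^2917 ≤ Pr 2207 := stepP (by norm_num) (by norm_num) prim2203 (by decide +kernel)
lemma prim2213 : 2^2928 ≤ Pr 2213 := stepP (by norm_num) (by norm_num) prim2207 (by decide +kernel)
lemma prim2221 : 2^2939 ≤ Pr 2221 := stepP (by norm_num) (by norm_num) prim2213 (by decide +kernel)
lemma prim2237 : 2^2950 ≤ Pr 2237 := stepP (by norm_num) (by norm_num) prim2221 (by decide +kernel)
lemma prim2239 : 2^2961 ≤ Pr 2239 := stepP (by norm_num) (by norm_num) prim2237 (by decide +kernel)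
lemma prim2243 : 2^2972 ≤ Pr 2243 := stepP (by norm_num) (by norm_num) prim2239 (by decide +kernel)
lemma prim2251 : 2^2983 ≤ Pr 2251 := stepP (by norm_num) (by norm_num) prim2243 (by decide +kernel)
lemma prim2267 : 2^2994 ≤ Pr 2267 := stepP (by norm_num) (by norm_num) prim2251 (by decide +kernel)
lemma prim2269 : 2^3005 ≤ Pr 2269 := stepP (by norm_num) (by norm_num) prim2267 (by decide +kernel)
lemma prim2273 : 2^3016 ≤ Pr 2273 := stepP (by norm_num) (by norm_num) prim2269 (by decide +kernel)
lemma prim2281 : 2^3027 ≤ Pr 2281 := stepP (by norm_num) (by norm_num) prim2273 (by decide +kernel)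
lemma prim2287 : 2^3038 ≤ Pr 2287 := stepP (by norm_num) (by norm_num) prim2281 (by decide +kernel)
lemma prim2293 : 2^3049 ≤ Pr 2293 := stepP (by norm_num) (by norm_num) prim2287 (by decide +kernel)
lemma prim2297 : 2^3060 ≤ Pr 2297 := stepP (by norm_num) (by norm_num) prim2293 (by decide +kernel)

lemma Lfin (m : ℕ) (h1 : 5 ≤ m) (h2 : m < 2048) : 68^(10*(m+1)) ≤ 25^(10*(m+1)) * Pr m ^ 21 := by
  by_cases c7 : m + 1 ≤ 7
  · exact checkE prim5 (by norm_num) h1 c7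
  by_cases c11 : m + 1 ≤ 11
  · exact checkE prim7 (by norm_num) (Nat.lt_succ_iff.mp (Nat.not_le.mp c7)) c11
  by_cases c13 : m + 1 ≤ 13
  · exact check' (c := 6) prim11 (by norm_num) (by norm_num) (Nat.lt_succ_iff.mp (Nat.not_le.mp c11)) c13
  by_cases c17 : m + 1 ≤ 17
  · exact check' (c := 7) prim13 (by norm_num) (by norm_num) (Nat.lt_succ_iff.mp (Nat.not_le.mp c13)) c17
  by_cases c19 : m + 1 ≤ 19
  · exact check' (c := 8) prim17 (by norm_num) (by norm_num) (Nat.lt_succ_iff.mp (Nat.not_le.mp c17)) c19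
  by_cases c23 : m + 1 ≤ 23
  · exact check' (c := 10) prim19 (by norm_num) (by norm_num) (Nat.lt_succ_iff.mp (Nat.not_le.mp c19)) c23
  by_cases c29 : m + 1 ≤ 29
  · exact check' (c := 12) prim23 (by norm_num) (by norm_num) (Nat.lt_succ_iff.mp (Nat.not_le.mp c23)) c29
  by_cases c31 : m + 1 ≤ 31
  · exact check' (c := 13) prim29 (by norm_num) (by norm_num) (Nat.lt_succ_iff.mp (Nat.not_le.mp c29)) c31
  by_cases c37 : m + 1 ≤ 37
  · exact check' (c := 15) prim31 (by norm_num) (by norm_num) (Nat.lt_succ_iff.mp (Nat.not_le.mp c31)) c37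
  by_cases c41 : m + 1 ≤ 41
  · exact check' (c := 17) prim37 (by norm_num) (by norm_num) (Nat.lt_succ_iff.mp (Nat.not_le.mp c37)) c41
  by_cases c43 : m + 1 ≤ 43
  · exact check' (c := 18) prim41 (by norm_num) (by norm_num) (Nat.lt_succ_iff.mp (Nat.not_le.mp c41)) c43
  by_cases c47 : m + 1 ≤ 47
  · exact check' (c := 19) prim43 (by norm_num) (by norm_num) (Nat.lt_succ_iff.mp (Nat.not_le.mp c43)) c47
  by_cases c53 : m + 1 ≤ 53
  · exact check' (c := 22) prim47 (by norm_num) (by norm_num) (Nat.lt_succ_iff.mp (Nat.not_le.mp c47)) c53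
  by_cases c59 : m + 1 ≤ 59
  · exact check' (c := 24) prim53 (by norm_num) (by norm_num) (Nat.lt_succ_iff.mp (Nat.not_le.mp c53)) c59
  by_cases c61 : m + 1 ≤ 61
  · exact check' (c := 25) prim59 (by norm_num) (by norm_num) (Nat.lt_succ_iff.mp (Nat.not_le.mp c59)) c61
  by_cases c67 : m + 1 ≤ 67
  · exact check' (c := 27) prim61 (by norm_num) (by norm_num) (Nat.lt_succ_iff.mp (Nat.not_le.mp c61)) c67
  by_cases c71 : m + 1 ≤ 71
  · exact check' (c := 29) prim67 (by norm_num) (by norm_num) (Nat.lt_succ_iff.mp (Nat.not_le.mp c67)) c71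
  by_cases c73 : m + 1 ≤ 73
  · exact check' (c := 30) prim71 (by norm_num) (by norm_num) (Nat.lt_succ_iff.mp (Nat.not_le.mp c71)) c73
  by_cases c79 : m + 1 ≤ 79
  · exact check' (c := 32) prim73 (by norm_num) (by norm_num) (Nat.lt_succ_iff.mp (Nat.not_le.mp c73)) c79
  by_cases c83 : m + 1 ≤ 83
  · exact check' (c := 34) prim79 (by norm_num) (by norm_num) (Nat.lt_succ_iff.mp (Nat.not_le.mp c79)) c83
  by_cases c89 : m + 1 ≤ 89
  · exact check' (c := 36) prim83 (by norm_num) (by norm_num) (Nat.lt_succ_iff.mp (Nat.not_le.mp c83)) c89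
  by_cases c97 : m + 1 ≤ 97
  · exact check' (c := 39) prim89 (by norm_num) (by norm_num) (Nat.lt_succ_iff.mp (Nat.not_le.mp c89)) c97
  by_cases c101 : m + 1 ≤ 101
  · exact check' (c := 41) prim97 (by norm_num) (by norm_num) (Nat.lt_succ_iff.mp (Nat.not_le.mp c97)) c101
  by_cases c103 : m + 1 ≤ 103
  · exact check' (c := 42) prim101 (by norm_num) (by norm_num) (Nat.lt_succ_iff.mp (Nat.not_le.mp c101)) c103
  by_cases c107 : m + 1 ≤ 107
  · exact check' (c := 43) prim103 (by norm_num) (by norm_num) (Nat.lt_succ_iff.mp (Nat.not_le.mp c103)) c107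
  by_cases c109 : m + 1 ≤ 109
  · exact check' (c := 44) prim107 (by norm_num) (by norm_num) (Nat.lt_succ_iff.mp (Nat.not_le.mp c107)) c109
  by_cases c113 : m + 1 ≤ 113
  · exact check' (c := 46) prim109 (by norm_num) (by norm_num) (Nat.lt_succ_iff.mp (Nat.not_le.mp c109)) c113
  by_cases c127 : m + 1 ≤ 127
  · exact check' (c := 51) prim113 (by norm_num) (by norm_num) (Nat.lt_succ_iff.mp (Nat.not_le.mp c113)) c127
  by_cases c131 : m + 1 ≤ 131
  · exact check' (c := 53) prim127 (by norm_num) (by norm_num) (Nat.lt_succ_iff.mp (Nat.not_le.mp c127)) c131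
  by_cases c137 : m + 1 ≤ 137
  · exact check' (c := 55) prim131 (by norm_num) (by norm_num) (Nat.lt_succ_iff.mp (Nat.not_le.mp c131)) c137
  by_cases c139 : m + 1 ≤ 139
  · exact check' (c := 56) prim137 (by norm_num) (by norm_num) (Nat.lt_succ_iff.mp (Nat.not_le.mp c137)) c139
  by_cases c149 : m + 1 ≤ 149
  · exact check' (c := 60) prim139 (by norm_num) (by norm_num) (Nat.lt_succ_iff.mp (Nat.not_le.mp c139)) c149
  by_cases c151 : m + 1 ≤ 151
  · exact check' (c := 61) prim149 (by norm_num) (by norm_num) (Nat.lt_succ_iff.mp (Nat.not_le.mp c149)) c151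
  by_cases c157 : m + 1 ≤ 157
  · exact check' (c := 63) prim151 (by norm_num) (by norm_num) (Nat.lt_succ_iff.mp (Nat.not_le.mp c151)) c157
  by_cases c163 : m + 1 ≤ 163
  · exact check' (c := 66) prim157 (by norm_num) (by norm_num) (Nat.lt_succ_iff.mp (Nat.not_le.mp c157)) c163
  by_cases c167 : m + 1 ≤ 167
  · exact check' (c := 67) prim163 (by norm_num) (by norm_num) (Nat.lt_succ_iff.mp (Nat.not_le.mp c163)) c167
  by_cases c173 : m + 1 ≤ 173
  · exact check' (c := 70) prim167 (by norm_num) (by norm_num) (Nat.lt_succ_iff.mp (Nat.not_le.mp c167)) c173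
  by_cases c179 : m + 1 ≤ 179
  · exact check' (c := 72) prim173 (by norm_num) (by norm_num) (Nat.lt_succ_iff.mp (Nat.not_le.mp c173)) c179
  by_cases c181 : m + 1 ≤ 181
  · exact check' (c := 73) prim179 (by norm_num) (by norm_num) (Nat.lt_succ_iff.mp (Nat.not_le.mp c179)) c181
  by_cases c191 : m + 1 ≤ 191
  · exact check' (c := 77) prim181 (by norm_num) (by norm_num) (Nat.lt_succ_iff.mp (Nat.not_le.mp c181)) c191
  by_cases c193 : m + 1 ≤ 193
  · exact check' (c := 78) prim191 (by norm_num) (by norm_num) (Nat.lt_succ_iff.mp (Nat.not_le.mp c191)) c193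
  by_cases c197 : m + 1 ≤ 197
  · exact check' (c := 79) prim193 (by norm_num) (by norm_num) (Nat.lt_succ_iff.mp (Nat.not_le.mp c193)) c197
  by_cases c199 : m + 1 ≤ 199
  · exact check' (c := 80) prim197 (by norm_num) (by norm_num) (Nat.lt_succ_iff.mp (Nat.not_le.mp c197)) c199
  by_cases c211 : m + 1 ≤ 211
  · exact check' (c := 85) prim199 (by norm_num) (by norm_num) (Nat.lt_succ_iff.mp (Nat.not_le.mp c199)) c211
  by_cases c223 : m + 1 ≤ 223
  · exact check' (c := 90) prim211 (by norm_num) (by norm_num) (Nat.lt_succ_iff.mp (Nat.not_le.mp c211)) c223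
  by_cases c227 : m + 1 ≤ 227
  · exact check' (c := 91) prim223 (by norm_num) (by norm_num) (Nat.lt_succ_iff.mp (Nat.not_le.mp c223)) c227
  by_cases c229 : m + 1 ≤ 229
  · exact check' (c := 92) prim227 (by norm_num) (by norm_num) (Nat.lt_succ_iff.mp (Nat.not_le.mp c227)) c229
  by_cases c233 : m + 1 ≤ 233
  · exact check' (c := 94) prim229 (by norm_num) (by norm_num) (Nat.lt_succ_iff.mp (Nat.not_le.mp c229)) c233
  by_cases c239 : m + 1 ≤ 239
  · exact check' (c := 96) prim233 (by norm_num) (by norm_num) (Nat.lt_succ_iff.mp (Nat.not_le.mp c233)) c239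
  by_cases c241 : m + 1 ≤ 241
  · exact check' (c := 97) prim239 (by norm_num) (by norm_num) (Nat.lt_succ_iff.mp (Nat.not_le.mp c239)) c241
  by_cases c251 : m + 1 ≤ 251
  · exact check' (c := 101) prim241 (by norm_num) (by norm_num) (Nat.lt_succ_iff.mp (Nat.not_le.mp c241)) c251
  by_cases c257 : m + 1 ≤ 257
  · exact check' (c := 103) prim251 (by norm_num) (by norm_num) (Nat.lt_succ_iff.mp (Nat.not_le.mp c251)) c257
  by_cases c263 : m + 1 ≤ 263
  · exact check' (c := 106) prim257 (by norm_num) (by norm_num) (Nat.lt_succ_iff.mp (Nat.not_le.mp c257)) c263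
  by_cases c269 : m + 1 ≤ 269
  · exact check' (c := 108) prim263 (by norm_num) (by norm_num) (Nat.lt_succ_iff.mp (Nat.not_le.mp c263)) c269
  by_cases c271 : m + 1 ≤ 271
  · exact check' (c := 109) prim269 (by norm_num) (by norm_num) (Nat.lt_succ_iff.mp (Nat.not_le.mp c269)) c271
  by_cases c277 : m + 1 ≤ 277
  · exact check' (c := 111) prim271 (by norm_num) (by norm_num) (Nat.lt_succ_iff.mp (Nat.not_le.mp c271)) c277
  by_cases c281 : m + 1 ≤ 281
  · exact check' (c := 113) prim277 (by norm_num) (by norm_num) (Nat.lt_succ_iff.mp (Nat.not_le.mp c277)) c281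
  by_cases c283 : m + 1 ≤ 283
  · exact check' (c := 114) prim281 (by norm_num) (by norm_num) (Nat.lt_succ_iff.mp (Nat.not_le.mp c281)) c283
  by_cases c293 : m + 1 ≤ 293
  · exact check' (c := 118) prim283 (by norm_num) (by norm_num) (Nat.lt_succ_iff.mp (Nat.not_le.mp c283)) c293
  by_cases c307 : m + 1 ≤ 307
  · exact check' (c := 123) prim293 (by norm_num) (by norm_num) (Nat.lt_succ_iff.mp (Nat.not_le.mp c293)) c307
  by_cases c311 : m + 1 ≤ 311
  · exact check' (c := 125) prim307 (by norm_num) (by norm_num) (Nat.lt_succ_iff.mp (Nat.not_le.mp c307)) c311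
  by_cases c313 : m + 1 ≤ 313
  · exact check' (c := 126) prim311 (by norm_num) (by norm_num) (Nat.lt_succ_iff.mp (Nat.not_le.mp c311)) c313
  by_cases c317 : m + 1 ≤ 317
  · exact check' (c := 127) prim313 (by norm_num) (by norm_num) (Nat.lt_succ_iff.mp (Nat.not_le.mp c313)) c317
  by_cases c331 : m + 1 ≤ 331
  · exact check' (c := 133) prim317 (by norm_num) (by norm_num) (Nat.lt_succ_iff.mp (Nat.not_le.mp c317)) c331
  by_cases c337 : m + 1 ≤ 337
  · exact check' (c := 135) prim331 (by norm_num) (by norm_num) (Nat.lt_succ_iff.mp (Nat.not_le.mp c331)) c337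
  by_cases c347 : m + 1 ≤ 347
  · exact check' (c := 139) prim337 (by norm_num) (by norm_num) (Nat.lt_succ_iff.mp (Nat.not_le.mp c337)) c347
  by_cases c349 : m + 1 ≤ 349
  · exact check' (c := 140) prim347 (by norm_num) (by norm_num) (Nat.lt_succ_iff.mp (Nat.not_le.mp c347)) c349
  by_cases c353 : m + 1 ≤ 353
  · exact check' (c := 142) prim349 (by norm_num) (by norm_num) (Nat.lt_succ_iff.mp (Nat.not_le.mp c349)) c353
  by_cases c359 : m + 1 ≤ 359
  · exact check' (c := 144) prim353 (by norm_num) (by norm_num) (Nat.lt_succ_iff.mp (Nat.not_le.mp c353)) c359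
  by_cases c367 : m + 1 ≤ 367
  · exact check' (c := 147) prim359 (by norm_num) (by norm_num) (Nat.lt_succ_iff.mp (Nat.not_le.mp c359)) c367
  by_cases c373 : m + 1 ≤ 373
  · exact check' (c := 150) prim367 (by norm_num) (by norm_num) (Nat.lt_succ_iff.mp (Nat.not_le.mp c367)) c373
  by_cases c379 : m + 1 ≤ 379
  · exact check' (c := 152) prim373 (by norm_num) (by norm_num) (Nat.lt_succ_iff.mp (Nat.not_le.mp c373)) c379
  by_cases c383 : m + 1 ≤ 383
  · exact check' (c := 154) prim379 (by norm_num) (by norm_num) (Nat.lt_succ_iff.mp (Nat.not_le.mp c379)) c383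
  by_cases c389 : m + 1 ≤ 389
  · exact check' (c := 156) prim383 (by norm_num) (by norm_num) (Nat.lt_succ_iff.mp (Nat.not_le.mp c383)) c389
  by_cases c397 : m + 1 ≤ 397
  · exact check' (c := 159) prim389 (by norm_num) (by norm_num) (Nat.lt_succ_iff.mp (Nat.not_le.mp c389)) c397
  by_cases c401 : m + 1 ≤ 401
  · exact check' (c := 161) prim397 (by norm_num) (by norm_num) (Nat.lt_succ_iff.mp (Nat.not_le.mp c397)) c401
  by_cases c409 : m + 1 ≤ 409
  · exact check' (c := 164) prim401 (by norm_num) (by norm_num) (Nat.lt_succ_iff.mp (Nat.not_le.mp c401)) c409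
  by_cases c419 : m + 1 ≤ 419
  · exact check' (c := 168) prim409 (by norm_num) (by norm_num) (Nat.lt_succ_iff.mp (Nat.not_le.mp c409)) c419
  by_cases c421 : m + 1 ≤ 421
  · exact check' (c := 169) prim419 (by norm_num) (by norm_num) (Nat.lt_succ_iff.mp (Nat.not_le.mp c419)) c421
  by_cases c431 : m + 1 ≤ 431
  · exact check' (c := 173) prim421 (by norm_num) (by norm_num) (Nat.lt_succ_iff.mp (Nat.not_le.mp c421)) c431
  by_cases c433 : m + 1 ≤ 433
  · exact check' (c := 174) prim431 (by norm_num) (by norm_num) (Nat.lt_succ_iff.mp (Nat.not_le.mp c431)) c433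
  by_cases c439 : m + 1 ≤ 439
  · exact check' (c := 176) prim433 (by norm_num) (by norm_num) (Nat.lt_succ_iff.mp (Nat.not_le.mp c433)) c439
  by_cases c443 : m + 1 ≤ 443
  · exact check' (c := 178) prim439 (by norm_num) (by norm_num) (Nat.lt_succ_iff.mp (Nat.not_le.mp c439)) c443
  by_cases c449 : m + 1 ≤ 449
  · exact check' (c := 180) prim443 (by norm_num) (by norm_num) (Nat.lt_succ_iff.mp (Nat.not_le.mp c443)) c449
  by_cases c457 : m + 1 ≤ 457
  · exact check' (c := 183) prim449 (by norm_num) (by norm_num) (Nat.lt_succ_iff.mp (Nat.not_le.mp c449)) c457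
  by_cases c461 : m + 1 ≤ 461
  · exact check' (c := 185) prim457 (by norm_num) (by norm_num) (Nat.lt_succ_iff.mp (Nat.not_le.mp c457)) c461
  by_cases c463 : m + 1 ≤ 463
  · exact check' (c := 186) prim461 (by norm_num) (by norm_num) (Nat.lt_succ_iff.mp (Nat.not_le.mp c461)) c463
  by_cases c467 : m + 1 ≤ 467
  · exact check' (c := 187) prim463 (by norm_num) (by norm_num) (Nat.lt_succ_iff.mp (Nat.not_le.mp c463)) c467
  by_cases c479 : m + 1 ≤ 479
  · exact check' (c := 192) prim467 (by norm_num) (by norm_num) (Nat.lt_succ_iff.mp (Nat.not_le.mp c467)) c479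
  by_cases c487 : m + 1 ≤ 487
  · exact check' (c := 195) prim479 (by norm_num) (by norm_num) (Nat.lt_succ_iff.mp (Nat.not_le.mp c479)) c487
  by_cases c491 : m + 1 ≤ 491
  · exact check' (c := 197) prim487 (by norm_num) (by norm_num) (Nat.lt_succ_iff.mp (Nat.not_le.mp c487)) c491
  by_cases c499 : m + 1 ≤ 499
  · exact check' (c := 200) prim491 (by norm_num) (by norm_num) (Nat.lt_succ_iff.mp (Nat.not_le.mp c491)) c499
  by_cases c503 : m + 1 ≤ 503
  · exact check' (c := 202) prim499 (by norm_num) (by norm_num) (Nat.lt_succ_iff.mp (Nat.not_le.mp c499)) c503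
  by_cases c509 : m + 1 ≤ 509
  · exact check' (c := 204) prim503 (by norm_num) (by norm_num) (Nat.lt_succ_iff.mp (Nat.not_le.mp c503)) c509
  by_cases c521 : m + 1 ≤ 521
  · exact check' (c := 209) prim509 (by norm_num) (by norm_num) (Nat.lt_succ_iff.mp (Nat.not_le.mp c509)) c521
  by_cases c523 : m + 1 ≤ 523
  · exact check' (c := 210) prim521 (by norm_num) (by norm_num) (Nat.lt_succ_iff.mp (Nat.not_le.mp c521)) c523
  by_cases c541 : m + 1 ≤ 541
  · exact check' (c := 217) prim523 (by norm_num) (by norm_num) (Nat.lt_succ_iff.mp (Nat.not_le.mp c523)) c541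
  by_cases c547 : m + 1 ≤ 547
  · exact check' (c := 219) prim541 (by norm_num) (by norm_num) (Nat.lt_succ_iff.mp (Nat.not_le.mp c541)) c547
  by_cases c557 : m + 1 ≤ 557
  · exact check' (c := 223) prim547 (by norm_num) (by norm_num) (Nat.lt_succ_iff.mp (Nat.not_le.mp c547)) c557
  by_cases c563 : m + 1 ≤ 563
  · exact check' (c := 226) prim557 (by norm_num) (by norm_num) (Nat.lt_succ_iff.mp (Nat.not_le.mp c557)) c563
  by_cases c569 : m + 1 ≤ 569
  · exact check' (c := 228) prim563 (by norm_num) (by norm_num) (Nat.lt_succ_iff.mp (Nat.not_le.mp c563)) c569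
  by_cases c571 : m + 1 ≤ 571
  · exact check' (c := 229) prim569 (by norm_num) (by norm_num) (Nat.lt_succ_iff.mp (Nat.not_le.mp c569)) c571
  by_cases c577 : m + 1 ≤ 577
  · exact check' (c := 231) prim571 (by norm_num) (by norm_num) (Nat.lt_succ_iff.mp (Nat.not_le.mp c571)) c577
  by_cases c587 : m + 1 ≤ 587
  · exact check' (c := 235) prim577 (by norm_num) (by norm_num) (Nat.lt_succ_iff.mp (Nat.not_le.mp c577)) c587
  by_cases c593 : m + 1 ≤ 593
  · exact check' (c := 238) prim587 (by norm_num) (by norm_num) (Nat.lt_succ_iff.mp (Nat.not_le.mp c587)) c593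
  by_cases c599 : m + 1 ≤ 599
  · exact check' (c := 240) prim593 (by norm_num) (by norm_num) (Nat.lt_succ_iff.mp (Nat.not_le.mp c593)) c599
  by_cases c601 : m + 1 ≤ 601
  · exact check' (c := 241) prim599 (by norm_num) (by norm_num) (Nat.lt_succ_iff.mp (Nat.not_le.mp c599)) c601
  by_cases c607 : m + 1 ≤ 607
  · exact check' (c := 243) prim601 (by norm_num) (by norm_num) (Nat.lt_succ_iff.mp (Nat.not_le.mp c601)) c607
  by_cases c613 : m + 1 ≤ 613
  · exact check' (c := 246) prim607 (by norm_num) (by norm_num) (Nat.lt_succ_iff.mp (Nat.not_le.mp c607)) c613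
  by_cases c617 : m + 1 ≤ 617
  · exact check' (c := 247) prim613 (by norm_num) (by norm_num) (Nat.lt_succ_iff.mp (Nat.not_le.mp c613)) c617
  by_cases c619 : m + 1 ≤ 619
  · exact check' (c := 248) prim617 (by norm_num) (by norm_num) (Nat.lt_succ_iff.mp (Nat.not_le.mp c617)) c619
  by_cases c631 : m + 1 ≤ 631
  · exact check' (c := 253) prim619 (by norm_num) (by norm_num) (Nat.lt_succ_iff.mp (Nat.not_le.mp c619)) c631
  by_cases c641 : m + 1 ≤ 641
  · exact check' (c := 257) prim631 (by norm_num) (by norm_num) (Nat.lt_succ_iff.mp (Nat.not_le.mp c631)) c641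
  by_cases c643 : m + 1 ≤ 643
  · exact check' (c := 258) prim641 (by norm_num) (by norm_num) (Nat.lt_succ_iff.mp (Nat.not_le.mp c641)) c643
  by_cases c647 : m + 1 ≤ 647
  · exact check' (c := 259) prim643 (by norm_num) (by norm_num) (Nat.lt_succ_iff.mp (Nat.not_le.mp c643)) c647
  by_cases c653 : m + 1 ≤ 653
  · exact check' (c := 262) prim647 (by norm_num) (by norm_num) (Nat.lt_succ_iff.mp (Nat.not_le.mp c647)) c653
  by_cases c659 : m + 1 ≤ 659
  · exact check' (c := 264) prim653 (by norm_num) (by norm_num) (Nat.lt_succ_iff.mp (Nat.not_le.mp c653)) c659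
  by_cases c661 : m + 1 ≤ 661
  · exact check' (c := 265) prim659 (by norm_num) (by norm_num) (Nat.lt_succ_iff.mp (Nat.not_le.mp c659)) c661
  by_cases c673 : m + 1 ≤ 673
  · exact check' (c := 270) prim661 (by norm_num) (by norm_num) (Nat.lt_succ_iff.mp (Nat.not_le.mp c661)) c673
  by_cases c677 : m + 1 ≤ 677
  · exact check' (c := 271) prim673 (by norm_num) (by norm_num) (Nat.lt_succ_iff.mp (Nat.not_le.mp c673)) c677
  by_cases c683 : m + 1 ≤ 683
  · exact check' (c := 274) prim677 (by norm_num) (by norm_num) (Nat.lt_succ_iff.mp (Nat.not_le.mp c677)) c683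
  by_cases c691 : m + 1 ≤ 691
  · exact check' (c := 277) prim683 (by norm_num) (by norm_num) (Nat.lt_succ_iff.mp (Nat.not_le.mp c683)) c691
  by_cases c701 : m + 1 ≤ 701
  · exact check' (c := 281) prim691 (by norm_num) (by norm_num) (Nat.lt_succ_iff.mp (Nat.not_le.mp c691)) c701
  by_cases c709 : m + 1 ≤ 709
  · exact check' (c := 284) prim701 (by norm_num) (by norm_num) (Nat.lt_succ_iff.mp (Nat.not_le.mp c701)) c709
  by_cases c719 : m + 1 ≤ 719
  · exact check' (c := 288) prim709 (by norm_num) (by norm_num) (Nat.lt_succ_iff.mp (Nat.not_le.mp c709)) c719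
  by_cases c727 : m + 1 ≤ 727
  · exact check' (c := 291) prim719 (by norm_num) (by norm_num) (Nat.lt_succ_iff.mp (Nat.not_le.mp c719)) c727
  by_cases c733 : m + 1 ≤ 733
  · exact check' (c := 294) prim727 (by norm_num) (by norm_num) (Nat.lt_succ_iff.mp (Nat.not_le.mp c727)) c733
  by_cases c739 : m + 1 ≤ 739
  · exact check' (c := 296) prim733 (by norm_num) (by norm_num) (Nat.lt_succ_iff.mp (Nat.not_le.mp c733)) c739
  by_cases c743 : m + 1 ≤ 743
  · exact check' (c := 298) prim739 (by norm_num) (by norm_num) (Nat.lt_succ_iff.mp (Nat.not_le.mp c739)) c743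
  by_cases c751 : m + 1 ≤ 751
  · exact check' (c := 301) prim743 (by norm_num) (by norm_num) (Nat.lt_succ_iff.mp (Nat.not_le.mp c743)) c751
  by_cases c757 : m + 1 ≤ 757
  · exact check' (c := 303) prim751 (by norm_num) (by norm_num) (Nat.lt_succ_iff.mp (Nat.not_le.mp c751)) c757
  by_cases c761 : m + 1 ≤ 761
  · exact check' (c := 305) prim757 (by norm_num) (by norm_num) (Nat.lt_succ_iff.mp (Nat.not_le.mp c757)) c761
  by_cases c769 : m + 1 ≤ 769
  · exact check' (c := 308) prim761 (by norm_num) (by norm_num) (Nat.lt_succ_iff.mp (Nat.not_le.mp c761)) c769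
  by_cases c773 : m + 1 ≤ 773
  · exact check' (c := 310) prim769 (by norm_num) (by norm_num) (Nat.lt_succ_iff.mp (Nat.not_le.mp c769)) c773
  by_cases c787 : m + 1 ≤ 787
  · exact check' (c := 315) prim773 (by norm_num) (by norm_num) (Nat.lt_succ_iff.mp (Nat.not_le.mp c773)) c787
  by_cases c797 : m + 1 ≤ 797
  · exact check' (c := 319) prim787 (by norm_num) (by norm_num) (Nat.lt_succ_iff.mp (Nat.not_le.mp c787)) c797
  by_cases c809 : m + 1 ≤ 809
  · exact check' (c := 324) prim797 (by norm_num) (by norm_num) (Nat.lt_succ_iff.mp (Nat.not_le.mp c797)) c809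
  by_cases c811 : m + 1 ≤ 811
  · exact check' (c := 325) prim809 (by norm_num) (by norm_num) (Nat.lt_succ_iff.mp (Nat.not_le.mp c809)) c811
  by_cases c821 : m + 1 ≤ 821
  · exact check' (c := 329) prim811 (by norm_num) (by norm_num) (Nat.lt_succ_iff.mp (Nat.not_le.mp c811)) c821
  by_cases c823 : m + 1 ≤ 823
  · exact check' (c := 330) prim821 (by norm_num) (by norm_num) (Nat.lt_succ_iff.mp (Nat.not_le.mp c821)) c823
  by_cases c827 : m + 1 ≤ 827
  · exact check' (c := 331) prim823 (by norm_num) (by norm_num) (Nat.lt_succ_iff.mp (Nat.not_le.mp c823)) c827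
  by_cases c829 : m + 1 ≤ 829
  · exact check' (c := 332) prim827 (by norm_num) (by norm_num) (Nat.lt_succ_iff.mp (Nat.not_le.mp c827)) c829
  by_cases c839 : m + 1 ≤ 839
  · exact check' (c := 336) prim829 (by norm_num) (by norm_num) (Nat.lt_succ_iff.mp (Nat.not_le.mp c829)) c839
  by_cases c853 : m + 1 ≤ 853
  · exact check' (c := 342) prim839 (by norm_num) (by norm_num) (Nat.lt_succ_iff.mp (Nat.not_le.mp c839)) c853
  by_cases c857 : m + 1 ≤ 857
  · exact check' (c := 343) prim853 (by norm_num) (by norm_num) (Nat.lt_succ_iff.mp (Nat.not_le.mp c853)) c857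
  by_cases c859 : m + 1 ≤ 859
  · exact check' (c := 344) prim857 (by norm_num) (by norm_num) (Nat.lt_succ_iff.mp (Nat.not_le.mp c857)) c859
  by_cases c863 : m + 1 ≤ 863
  · exact check' (c := 346) prim859 (by norm_num) (by norm_num) (Nat.lt_succ_iff.mp (Nat.not_le.mp c859)) c863
  by_cases c877 : m + 1 ≤ 877
  · exact check' (c := 351) prim863 (by norm_num) (by norm_num) (Nat.lt_succ_iff.mp (Nat.not_le.mp c863)) c877
  by_cases c881 : m + 1 ≤ 881
  · exact check' (c := 353) prim877 (by norm_num) (by norm_num) (Nat.lt_succ_iff.mp (Nat.not_le.mp c877)) c881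
  by_cases c883 : m + 1 ≤ 883
  · exact check' (c := 354) prim881 (by norm_num) (by norm_num) (Nat.lt_succ_iff.mp (Nat.not_le.mp c881)) c883
  by_cases c887 : m + 1 ≤ 887
  · exact check' (c := 355) prim883 (by norm_num) (by norm_num) (Nat.lt_succ_iff.mp (Nat.not_le.mp c883)) c887
  by_cases c907 : m + 1 ≤ 907
  · exact check' (c := 363) prim887 (by norm_num) (by norm_num) (Nat.lt_succ_iff.mp (Nat.not_le.mp c887)) c907
  by_cases c911 : m + 1 ≤ 911
  · exact check' (c := 365) prim907 (by norm_num) (by norm_num) (Nat.lt_succ_iff.mp (Nat.not_le.mp c907)) c911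
  by_cases c919 : m + 1 ≤ 919
  · exact check' (c := 368) prim911 (by norm_num) (by norm_num) (Nat.lt_succ_iff.mp (Nat.not_le.mp c911)) c919
  by_cases c929 : m + 1 ≤ 929
  · exact check' (c := 372) prim919 (by norm_num) (by norm_num) (Nat.lt_succ_iff.mp (Nat.not_le.mp c919)) c929
  by_cases c937 : m + 1 ≤ 937
  · exact check' (c := 375) prim929 (by norm_num) (by norm_num) (Nat.lt_succ_iff.mp (Nat.not_le.mp c929)) c937
  by_cases c941 : m + 1 ≤ 941
  · exact check' (c := 377) prim937 (by norm_num) (by norm_num) (Nat.lt_succ_iff.mp (Nat.not_le.mp c937)) c941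
  by_cases c947 : m + 1 ≤ 947
  · exact check' (c := 379) prim941 (by norm_num) (by norm_num) (Nat.lt_succ_iff.mp (Nat.not_le.mp c941)) c947
  by_cases c953 : m + 1 ≤ 953
  · exact check' (c := 382) prim947 (by norm_num) (by norm_num) (Nat.lt_succ_iff.mp (Nat.not_le.mp c947)) c953
  by_cases c967 : m + 1 ≤ 967
  · exact check' (c := 387) prim953 (by norm_num) (by norm_num) (Nat.lt_succ_iff.mp (Nat.not_le.mp c953)) c967
  by_cases c971 : m + 1 ≤ 971
  · exact check' (c := 389) prim967 (by norm_num) (by norm_num) (Nat.lt_succ_iff.mp (Nat.not_le.mp c967)) c971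
  by_cases c977 : m + 1 ≤ 977
  · exact check' (c := 391) prim971 (by norm_num) (by norm_num) (Nat.lt_succ_iff.mp (Nat.not_le.mp c971)) c977
  by_cases c983 : m + 1 ≤ 983
  · exact check' (c := 394) prim977 (by norm_num) (by norm_num) (Nat.lt_succ_iff.mp (Nat.not_le.mp c977)) c983
  by_cases c991 : m + 1 ≤ 991
  · exact check' (c := 397) prim983 (by norm_num) (by norm_num) (Nat.lt_succ_iff.mp (Nat.not_le.mp c983)) c991
  by_cases c997 : m + 1 ≤ 997
  · exact check' (c := 399) prim991 (by norm_num) (by norm_num) (Nat.lt_succ_iff.mp (Nat.not_le.mp c991)) c997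
  by_cases c1009 : m + 1 ≤ 1009
  · exact check' (c := 404) prim997 (by norm_num) (by norm_num) (Nat.lt_succ_iff.mp (Nat.not_le.mp c997)) c1009
  by_cases c1013 : m + 1 ≤ 1013
  · exact check' (c := 406) prim1009 (by norm_num) (by norm_num) (Nat.lt_succ_iff.mp (Nat.not_le.mp c1009)) c1013
  by_cases c1019 : m + 1 ≤ 1019
  · exact check' (c := 408) prim1013 (by norm_num) (by norm_num) (Nat.lt_succ_iff.mp (Nat.not_le.mp c1013)) c1019
  by_cases c1021 : m + 1 ≤ 1021
  · exact check' (c := 409) prim1019 (by norm_num) (by norm_num) (Nat.lt_succ_iff.mp (Nat.not_le.mp c1019)) c1021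
  by_cases c1031 : m + 1 ≤ 1031
  · exact check' (c := 413) prim1021 (by norm_num) (by norm_num) (Nat.lt_succ_iff.mp (Nat.not_le.mp c1021)) c1031
  by_cases c1033 : m + 1 ≤ 1033
  · exact check' (c := 414) prim1031 (by norm_num) (by norm_num) (Nat.lt_succ_iff.mp (Nat.not_le.mp c1031)) c1033
  by_cases c1039 : m + 1 ≤ 1039
  · exact check' (c := 416) prim1033 (by norm_num) (by norm_num) (Nat.lt_succ_iff.mp (Nat.not_le.mp c1033)) c1039
  by_cases c1049 : m + 1 ≤ 1049
  · exact check' (c := 420) prim1039 (by norm_num) (by norm_num) (Nat.lt_succ_iff.mp (Nat.not_le.mp c1039)) c1049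
  by_cases c1051 : m + 1 ≤ 1051
  · exact check' (c := 421) prim1049 (by norm_num) (by norm_num) (Nat.lt_succ_iff.mp (Nat.not_le.mp c1049)) c1051
  by_cases c1061 : m + 1 ≤ 1061
  · exact check' (c := 425) prim1051 (by norm_num) (by norm_num) (Nat.lt_succ_iff.mp (Nat.not_le.mp c1051)) c1061
  by_cases c1063 : m + 1 ≤ 1063
  · exact check' (c := 426) prim1061 (by norm_num) (by norm_num) (Nat.lt_succ_iff.mp (Nat.not_le.mp c1061)) c1063
  by_cases c1069 : m + 1 ≤ 1069
  · exact check' (c := 428) prim1063 (by norm_num) (by norm_num) (Nat.lt_succ_iff.mp (Nat.not_le.mp c1063)) c1069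
  by_cases c1087 : m + 1 ≤ 1087
  · exact check' (c := 435) prim1069 (by norm_num) (by norm_num) (Nat.lt_succ_iff.mp (Nat.not_le.mp c1069)) c1087
  by_cases c1091 : m + 1 ≤ 1091
  · exact check' (c := 437) prim1087 (by norm_num) (by norm_num) (Nat.lt_succ_iff.mp (Nat.not_le.mp c1087)) c1091
  by_cases c1093 : m + 1 ≤ 1093
  · exact check' (c := 438) prim1091 (by norm_num) (by norm_num) (Nat.lt_succ_iff.mp (Nat.not_le.mp c1091)) c1093
  by_cases c1097 : m + 1 ≤ 1097
  · exact check' (c := 439) prim1093 (by norm_num) (by norm_num) (Nat.lt_succ_iff.mp (Nat.not_le.mp c1093)) c1097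
  by_cases c1103 : m + 1 ≤ 1103
  · exact check' (c := 442) prim1097 (by norm_num) (by norm_num) (Nat.lt_succ_iff.mp (Nat.not_le.mp c1097)) c1103
  by_cases c1109 : m + 1 ≤ 1109
  · exact check' (c := 444) prim1103 (by norm_num) (by norm_num) (Nat.lt_succ_iff.mp (Nat.not_le.mp c1103)) c1109
  by_cases c1117 : m + 1 ≤ 1117
  · exact check' (c := 447) prim1109 (by norm_num) (by norm_num) (Nat.lt_succ_iff.mp (Nat.not_le.mp c1109)) c1117
  by_cases c1123 : m + 1 ≤ 1123
  · exact check' (c := 450) prim1117 (by norm_num) (by norm_num) (Nat.lt_succ_iff.mp (Nat.not_le.mp c1117)) c1123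
  by_cases c1129 : m + 1 ≤ 1129
  · exact check' (c := 452) prim1123 (by norm_num) (by norm_num) (Nat.lt_succ_iff.mp (Nat.not_le.mp c1123)) c1129
  by_cases c1151 : m + 1 ≤ 1151
  · exact check' (c := 461) prim1129 (by norm_num) (by norm_num) (Nat.lt_succ_iff.mp (Nat.not_le.mp c1129)) c1151
  by_cases c1153 : m + 1 ≤ 1153
  · exact check' (c := 462) prim1151 (by norm_num) (by norm_num) (Nat.lt_succ_iff.mp (Nat.not_le.mp c1151)) c1153
  by_cases c1163 : m + 1 ≤ 1163
  · exact check' (c := 466) prim1153 (by norm_num) (by norm_num) (Nat.lt_succ_iff.mp (Nat.not_le.mp c1153)) c1163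
  by_cases c1171 : m + 1 ≤ 1171
  · exact check' (c := 469) prim1163 (by norm_num) (by norm_num) (Nat.lt_succ_iff.mp (Nat.not_le.mp c1163)) c1171
  by_cases c1181 : m + 1 ≤ 1181
  · exact check' (c := 473) prim1171 (by norm_num) (by norm_num) (Nat.lt_succ_iff.mp (Nat.not_le.mp c1171)) c1181
  by_cases c1187 : m + 1 ≤ 1187
  · exact check' (c := 475) prim1181 (by norm_num) (by norm_num) (Nat.lt_succ_iff.mp (Nat.not_le.mp c1181)) c1187
  by_cases c1193 : m + 1 ≤ 1193
  · exact check' (c := 478) prim1187 (by norm_num) (by norm_num) (Nat.lt_succ_iff.mp (Nat.not_le.mp c1187)) c1193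
  by_cases c1201 : m + 1 ≤ 1201
  · exact check' (c := 481) prim1193 (by norm_num) (by norm_num) (Nat.lt_succ_iff.mp (Nat.not_le.mp c1193)) c1201
  by_cases c1213 : m + 1 ≤ 1213
  · exact check' (c := 486) prim1201 (by norm_num) (by norm_num) (Nat.lt_succ_iff.mp (Nat.not_le.mp c1201)) c1213
  by_cases c1217 : m + 1 ≤ 1217
  · exact check' (c := 487) prim1213 (by norm_num) (by norm_num) (Nat.lt_succ_iff.mp (Nat.not_le.mp c1213)) c1217
  by_cases c1223 : m + 1 ≤ 1223
  · exact check' (c := 490) prim1217 (by norm_num) (by norm_num) (Nat.lt_succ_iff.mp (Nat.not_le.mp c1217)) c1223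
  by_cases c1229 : m + 1 ≤ 1229
  · exact check' (c := 492) prim1223 (by norm_num) (by norm_num) (Nat.lt_succ_iff.mp (Nat.not_le.mp c1223)) c1229
  by_cases c1231 : m + 1 ≤ 1231
  · exact check' (c := 493) prim1229 (by norm_num) (by norm_num) (Nat.lt_succ_iff.mp (Nat.not_le.mp c1229)) c1231
  by_cases c1237 : m + 1 ≤ 1237
  · exact check' (c := 495) prim1231 (by norm_num) (by norm_num) (Nat.lt_succ_iff.mp (Nat.not_le.mp c1231)) c1237
  by_cases c1249 : m + 1 ≤ 1249
  · exact check' (c := 500) prim1237 (by norm_num) (by norm_num) (Nat.lt_succ_iff.mp (Nat.not_le.mp c1237)) c1249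
  by_cases c1259 : m + 1 ≤ 1259
  · exact check' (c := 504) prim1249 (by norm_num) (by norm_num) (Nat.lt_succ_iff.mp (Nat.not_le.mp c1249)) c1259
  by_cases c1277 : m + 1 ≤ 1277
  · exact check' (c := 511) prim1259 (by norm_num) (by norm_num) (Nat.lt_succ_iff.mp (Nat.not_le.mp c1259)) c1277
  by_cases c1279 : m + 1 ≤ 1279
  · exact check' (c := 512) prim1277 (by norm_num) (by norm_num) (Nat.lt_succ_iff.mp (Nat.not_le.mp c1277)) c1279
  by_cases c1283 : m + 1 ≤ 1283
  · exact check' (c := 514) prim1279 (by norm_num) (by norm_num) (Nat.lt_succ_iff.mp (Nat.not_le.mp c1279)) c1283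
  by_cases c1289 : m + 1 ≤ 1289
  · exact check' (c := 516) prim1283 (by norm_num) (by norm_num) (Nat.lt_succ_iff.mp (Nat.not_le.mp c1283)) c1289
  by_cases c1291 : m + 1 ≤ 1291
  · exact check' (c := 517) prim1289 (by norm_num) (by norm_num) (Nat.lt_succ_iff.mp (Nat.not_le.mp c1289)) c1291
  by_cases c1297 : m + 1 ≤ 1297
  · exact check' (c := 519) prim1291 (by norm_num) (by norm_num) (Nat.lt_succ_iff.mp (Nat.not_le.mp c1291)) c1297
  by_cases c1301 : m + 1 ≤ 1301
  · exact check' (c := 521) prim1297 (by norm_num) (by norm_num) (Nat.lt_succ_iff.mp (Nat.not_le.mp c1297)) c1301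
  by_cases c1303 : m + 1 ≤ 1303
  · exact check' (c := 522) prim1301 (by norm_num) (by norm_num) (Nat.lt_succ_iff.mp (Nat.not_le.mp c1301)) c1303
  by_cases c1307 : m + 1 ≤ 1307
  · exact check' (c := 523) prim1303 (by norm_num) (by norm_num) (Nat.lt_succ_iff.mp (Nat.not_le.mp c1303)) c1307
  by_cases c1319 : m + 1 ≤ 1319
  · exact check' (c := 528) prim1307 (by norm_num) (by norm_num) (Nat.lt_succ_iff.mp (Nat.not_le.mp c1307)) c1319
  by_cases c1321 : m + 1 ≤ 1321
  · exact check' (c := 529) prim1319 (by norm_num) (by norm_num) (Nat.lt_succ_iff.mp (Nat.not_le.mp c1319)) c1321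
  by_cases c1327 : m + 1 ≤ 1327
  · exact check' (c := 531) prim1321 (by norm_num) (by norm_num) (Nat.lt_succ_iff.mp (Nat.not_le.mp c1321)) c1327
  by_cases c1361 : m + 1 ≤ 1361
  · exact check' (c := 545) prim1327 (by norm_num) (by norm_num) (Nat.lt_succ_iff.mp (Nat.not_le.mp c1327)) c1361
  by_cases c1367 : m + 1 ≤ 1367
  · exact check' (c := 547) prim1361 (by norm_num) (by norm_num) (Nat.lt_succ_iff.mp (Nat.not_le.mp c1361)) c1367
  by_cases c1373 : m + 1 ≤ 1373
  · exact check' (c := 550) prim1367 (by norm_num) (by norm_num) (Nat.lt_succ_iff.mp (Nat.not_le.mp c1367)) c1373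
  by_cases c1381 : m + 1 ≤ 1381
  · exact check' (c := 553) prim1373 (by norm_num) (by norm_num) (Nat.lt_succ_iff.mp (Nat.not_le.mp c1373)) c1381
  by_cases c1399 : m + 1 ≤ 1399
  · exact check' (c := 560) prim1381 (by norm_num) (by norm_num) (Nat.lt_succ_iff.mp (Nat.not_le.mp c1381)) c1399
  by_cases c1409 : m + 1 ≤ 1409
  · exact check' (c := 564) prim1399 (by norm_num) (by norm_num) (Nat.lt_succ_iff.mp (Nat.not_le.mp c1399)) c1409
  by_cases c1423 : m + 1 ≤ 1423
  · exact check' (c := 570) prim1409 (by norm_num) (by norm_num) (Nat.lt_succ_iff.mp (Nat.not_le.mp c1409)) c1423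
  by_cases c1427 : m + 1 ≤ 1427
  · exact check' (c := 571) prim1423 (by norm_num) (by norm_num) (Nat.lt_succ_iff.mp (Nat.not_le.mp c1423)) c1427
  by_cases c1429 : m + 1 ≤ 1429
  · exact check' (c := 572) prim1427 (by norm_num) (by norm_num) (Nat.lt_succ_iff.mp (Nat.not_le.mp c1427)) c1429
  by_cases c1433 : m + 1 ≤ 1433
  · exact check' (c := 574) prim1429 (by norm_num) (by norm_num) (Nat.lt_succ_iff.mp (Nat.not_le.mp c1429)) c1433
  by_cases c1439 : m + 1 ≤ 1439
  · exact check' (c := 576) prim1433 (by norm_num) (by norm_num) (Nat.lt_succ_iff.mp (Nat.not_le.mp c1433)) c1439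
  by_cases c1447 : m + 1 ≤ 1447
  · exact check' (c := 579) prim1439 (by norm_num) (by norm_num) (Nat.lt_succ_iff.mp (Nat.not_le.mp c1439)) c1447
  by_cases c1451 : m + 1 ≤ 1451
  · exact check' (c := 581) prim1447 (by norm_num) (by norm_num) (Nat.lt_succ_iff.mp (Nat.not_le.mp c1447)) c1451
  by_cases c1453 : m + 1 ≤ 1453
  · exact check' (c := 582) prim1451 (by norm_num) (by norm_num) (Nat.lt_succ_iff.mp (Nat.not_le.mp c1451)) c1453
  by_cases c1459 : m + 1 ≤ 1459
  · exact check' (c := 584) prim1453 (by norm_num) (by norm_num) (Nat.lt_succ_iff.mp (Nat.not_le.mp c1453)) c1459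
  by_cases c1471 : m + 1 ≤ 1471
  · exact check' (c := 589) prim1459 (by norm_num) (by norm_num) (Nat.lt_succ_iff.mp (Nat.not_le.mp c1459)) c1471
  by_cases c1481 : m + 1 ≤ 1481
  · exact check' (c := 593) prim1471 (by norm_num) (by norm_num) (Nat.lt_succ_iff.mp (Nat.not_le.mp c1471)) c1481
  by_cases c1483 : m + 1 ≤ 1483
  · exact check' (c := 594) prim1481 (by norm_num) (by norm_num) (Nat.lt_succ_iff.mp (Nat.not_le.mp c1481)) c1483
  by_cases c1487 : m + 1 ≤ 1487
  · exact check' (c := 595) prim1483 (by norm_num) (by norm_num) (Nat.lt_succ_iff.mp (Nat.not_le.mp c1483)) c1487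
  by_cases c1489 : m + 1 ≤ 1489
  · exact check' (c := 596) prim1487 (by norm_num) (by norm_num) (Nat.lt_succ_iff.mp (Nat.not_le.mp c1487)) c1489
  by_cases c1493 : m + 1 ≤ 1493
  · exact check' (c := 598) prim1489 (by norm_num) (by norm_num) (Nat.lt_succ_iff.mp (Nat.not_le.mp c1489)) c1493
  by_cases c1499 : m + 1 ≤ 1499
  · exact check' (c := 600) prim1493 (by norm_num) (by norm_num) (Nat.lt_succ_iff.mp (Nat.not_le.mp c1493)) c1499
  by_cases c1511 : m + 1 ≤ 1511
  · exact check' (c := 605) prim1499 (by norm_num) (by norm_num) (Nat.lt_succ_iff.mp (Nat.not_le.mp c1499)) c1511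
  by_cases c1523 : m + 1 ≤ 1523
  · exact check' (c := 610) prim1511 (by norm_num) (by norm_num) (Nat.lt_succ_iff.mp (Nat.not_le.mp c1511)) c1523
  by_cases c1531 : m + 1 ≤ 1531
  · exact check' (c := 613) prim1523 (by norm_num) (by norm_num) (Nat.lt_succ_iff.mp (Nat.not_le.mp c1523)) c1531
  by_cases c1543 : m + 1 ≤ 1543
  · exact check' (c := 618) prim1531 (by norm_num) (by norm_num) (Nat.lt_succ_iff.mp (Nat.not_le.mp c1531)) c1543
  by_cases c1549 : m + 1 ≤ 1549
  · exact check' (c := 620) prim1543 (by norm_num) (by norm_num) (Nat.lt_succ_iff.mp (Nat.not_le.mp c1543)) c1549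
  by_cases c1553 : m + 1 ≤ 1553
  · exact check' (c := 622) prim1549 (by norm_num) (by norm_num) (Nat.lt_succ_iff.mp (Nat.not_le.mp c1549)) c1553
  by_cases c1559 : m + 1 ≤ 1559
  · exact check' (c := 624) prim1553 (by norm_num) (by norm_num) (Nat.lt_succ_iff.mp (Nat.not_le.mp c1553)) c1559
  by_cases c1567 : m + 1 ≤ 1567
  · exact check' (c := 627) prim1559 (by norm_num) (by norm_num) (Nat.lt_succ_iff.mp (Nat.not_le.mp c1559)) c1567
  by_cases c1571 : m + 1 ≤ 1571
  · exact check' (c := 629) prim1567 (by norm_num) (by norm_num) (Nat.lt_succ_iff.mp (Nat.not_le.mp c1567)) c1571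
  by_cases c1579 : m + 1 ≤ 1579
  · exact check' (c := 632) prim1571 (by norm_num) (by norm_num) (Nat.lt_succ_iff.mp (Nat.not_le.mp c1571)) c1579
  by_cases c1583 : m + 1 ≤ 1583
  · exact check' (c := 634) prim1579 (by norm_num) (by norm_num) (Nat.lt_succ_iff.mp (Nat.not_le.mp c1579)) c1583
  by_cases c1597 : m + 1 ≤ 1597
  · exact check' (c := 639) prim1583 (by norm_num) (by norm_num) (Nat.lt_succ_iff.mp (Nat.not_le.mp c1583)) c1597
  by_cases c1601 : m + 1 ≤ 1601
  · exact check' (c := 641) prim1597 (by norm_num) (by norm_num) (Nat.lt_succ_iff.mp (Nat.not_le.mp c1597)) c1601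
  by_cases c1607 : m + 1 ≤ 1607
  · exact check' (c := 643) prim1601 (by norm_num) (by norm_num) (Nat.lt_succ_iff.mp (Nat.not_le.mp c1601)) c1607
  by_cases c1609 : m + 1 ≤ 1609
  · exact check' (c := 644) prim1607 (by norm_num) (by norm_num) (Nat.lt_succ_iff.mp (Nat.not_le.mp c1607)) c1609
  by_cases c1613 : m + 1 ≤ 1613
  · exact check' (c := 646) prim1609 (by norm_num) (by norm_num) (Nat.lt_succ_iff.mp (Nat.not_le.mp c1609)) c1613
  by_cases c1619 : m + 1 ≤ 1619
  · exact check' (c := 648) prim1613 (by norm_num) (by norm_num) (Nat.lt_succ_iff.mp (Nat.not_le.mp c1613)) c1619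
  by_cases c1621 : m + 1 ≤ 1621
  · exact check' (c := 649) prim1619 (by norm_num) (by norm_num) (Nat.lt_succ_iff.mp (Nat.not_le.mp c1619)) c1621
  by_cases c1627 : m + 1 ≤ 1627
  · exact check' (c := 651) prim1621 (by norm_num) (by norm_num) (Nat.lt_succ_iff.mp (Nat.not_le.mp c1621)) c1627
  by_cases c1637 : m + 1 ≤ 1637
  · exact check' (c := 655) prim1627 (by norm_num) (by norm_num) (Nat.lt_succ_iff.mp (Nat.not_le.mp c1627)) c1637
  by_cases c1657 : m + 1 ≤ 1657
  · exact check' (c := 663) prim1637 (by norm_num) (by norm_num) (Nat.lt_succ_iff.mp (Nat.not_le.mp c1637)) c1657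
  by_cases c1663 : m + 1 ≤ 1663
  · exact check' (c := 666) prim1657 (by norm_num) (by norm_num) (Nat.lt_succ_iff.mp (Nat.not_le.mp c1657)) c1663
  by_cases c1667 : m + 1 ≤ 1667
  · exact check' (c := 667) prim1663 (by norm_num) (by norm_num) (Nat.lt_succ_iff.mp (Nat.not_le.mp c1663)) c1667
  by_cases c1669 : m + 1 ≤ 1669
  · exact check' (c := 668) prim1667 (by norm_num) (by norm_num) (Nat.lt_succ_iff.mp (Nat.not_le.mp c1667)) c1669
  by_cases c1693 : m + 1 ≤ 1693
  · exact check' (c := 678) prim1669 (by norm_num) (by norm_num) (Nat.lt_succ_iff.mp (Nat.not_le.mp c1669)) c1693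
  by_cases c1697 : m + 1 ≤ 1697
  · exact check' (c := 679) prim1693 (by norm_num) (by norm_num) (Nat.lt_succ_iff.mp (Nat.not_le.mp c1693)) c1697
  by_cases c1699 : m + 1 ≤ 1699
  · exact check' (c := 680) prim1697 (by norm_num) (by norm_num) (Nat.lt_succ_iff.mp (Nat.not_le.mp c1697)) c1699
  by_cases c1709 : m + 1 ≤ 1709
  · exact check' (c := 684) prim1699 (by norm_num) (by norm_num) (Nat.lt_succ_iff.mp (Nat.not_le.mp c1699)) c1709
  by_cases c1721 : m + 1 ≤ 1721
  · exact check' (c := 689) prim1709 (by norm_num) (by norm_num) (Nat.lt_succ_iff.mp (Nat.not_le.mp c1709)) c1721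
  by_cases c1723 : m + 1 ≤ 1723
  · exact check' (c := 690) prim1721 (by norm_num) (by norm_num) (Nat.lt_succ_iff.mp (Nat.not_le.mp c1721)) c1723
  by_cases c1733 : m + 1 ≤ 1733
  · exact check' (c := 694) prim1723 (by norm_num) (by norm_num) (Nat.lt_succ_iff.mp (Nat.not_le.mp c1723)) c1733
  by_cases c1741 : m + 1 ≤ 1741
  · exact check' (c := 697) prim1733 (by norm_num) (by norm_num) (Nat.lt_succ_iff.mp (Nat.not_le.mp c1733)) c1741
  by_cases c1747 : m + 1 ≤ 1747
  · exact check' (c := 699) prim1741 (by norm_num) (by norm_num) (Nat.lt_succ_iff.mp (Nat.not_le.mp c1741)) c1747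
  by_cases c1753 : m + 1 ≤ 1753
  · exact check' (c := 702) prim1747 (by norm_num) (by norm_num) (Nat.lt_succ_iff.mp (Nat.not_le.mp c1747)) c1753
  by_cases c1759 : m + 1 ≤ 1759
  · exact check' (c := 704) prim1753 (by norm_num) (by norm_num) (Nat.lt_succ_iff.mp (Nat.not_le.mp c1753)) c1759
  by_cases c1777 : m + 1 ≤ 1777
  · exact check' (c := 711) prim1759 (by norm_num) (by norm_num) (Nat.lt_succ_iff.mp (Nat.not_le.mp c1759)) c1777
  by_cases c1783 : m + 1 ≤ 1783
  · exact check' (c := 714) prim1777 (by norm_num) (by norm_num) (Nat.lt_succ_iff.mp (Nat.not_le.mp c1777)) c1783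
  by_cases c1787 : m + 1 ≤ 1787
  · exact check' (c := 715) prim1783 (by norm_num) (by norm_num) (Nat.lt_succ_iff.mp (Nat.not_le.mp c1783)) c1787
  by_cases c1789 : m + 1 ≤ 1789
  · exact check' (c := 716) prim1787 (by norm_num) (by norm_num) (Nat.lt_succ_iff.mp (Nat.not_le.mp c1787)) c1789
  by_cases c1801 : m + 1 ≤ 1801
  · exact check' (c := 721) prim1789 (by norm_num) (by norm_num) (Nat.lt_succ_iff.mp (Nat.not_le.mp c1789)) c1801
  by_cases c1811 : m + 1 ≤ 1811
  · exact check' (c := 725) prim1801 (by norm_num) (by norm_num) (Nat.lt_succ_iff.mp (Nat.not_le.mp c1801)) c1811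
  by_cases c1823 : m + 1 ≤ 1823
  · exact check' (c := 730) prim1811 (by norm_num) (by norm_num) (Nat.lt_succ_iff.mp (Nat.not_le.mp c1811)) c1823
  by_cases c1831 : m + 1 ≤ 1831
  · exact check' (c := 733) prim1823 (by norm_num) (by norm_num) (Nat.lt_succ_iff.mp (Nat.not_le.mp c1823)) c1831
  by_cases c1847 : m + 1 ≤ 1847
  · exact check' (c := 739) prim1831 (by norm_num) (by norm_num) (Nat.lt_succ_iff.mp (Nat.not_le.mp c1831)) c1847
  by_cases c1861 : m + 1 ≤ 1861
  · exact check' (c := 745) prim1847 (by norm_num) (by norm_num) (Nat.lt_succ_iff.mp (Nat.not_le.mp c1847)) c1861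
  by_cases c1867 : m + 1 ≤ 1867
  · exact check' (c := 747) prim1861 (by norm_num) (by norm_num) (Nat.lt_succ_iff.mp (Nat.not_le.mp c1861)) c1867
  by_cases c1871 : m + 1 ≤ 1871
  · exact check' (c := 749) prim1867 (by norm_num) (by norm_num) (Nat.lt_succ_iff.mp (Nat.not_le.mp c1867)) c1871
  by_cases c1873 : m + 1 ≤ 1873
  · exact check' (c := 750) prim1871 (by norm_num) (by norm_num) (Nat.lt_succ_iff.mp (Nat.not_le.mp c1871)) c1873
  by_cases c1877 : m + 1 ≤ 1877
  · exact check' (c := 751) prim1873 (by norm_num) (by norm_num) (Nat.lt_succ_iff.mp (Nat.not_le.mp c1873)) c1877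
  by_cases c1879 : m + 1 ≤ 1879
  · exact check' (c := 752) prim1877 (by norm_num) (by norm_num) (Nat.lt_succ_iff.mp (Nat.not_le.mp c1877)) c1879
  by_cases c1889 : m + 1 ≤ 1889
  · exact check' (c := 756) prim1879 (by norm_num) (by norm_num) (Nat.lt_succ_iff.mp (Nat.not_le.mp c1879)) c1889
  by_cases c1901 : m + 1 ≤ 1901
  · exact check' (c := 761) prim1889 (by norm_num) (by norm_num) (Nat.lt_succ_iff.mp (Nat.not_le.mp c1889)) c1901
  by_cases c1907 : m + 1 ≤ 1907
  · exact check' (c := 763) prim1901 (by norm_num) (by norm_num) (Nat.lt_succ_iff.mp (Nat.not_le.mp c1901)) c1907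
  by_cases c1913 : m + 1 ≤ 1913
  · exact check' (c := 766) prim1907 (by norm_num) (by norm_num) (Nat.lt_succ_iff.mp (Nat.not_le.mp c1907)) c1913
  by_cases c1931 : m + 1 ≤ 1931
  · exact check' (c := 773) prim1913 (by norm_num) (by norm_num) (Nat.lt_succ_iff.mp (Nat.not_le.mp c1913)) c1931
  by_cases c1933 : m + 1 ≤ 1933
  · exact check' (c := 774) prim1931 (by norm_num) (by norm_num) (Nat.lt_succ_iff.mp (Nat.not_le.mp c1931)) c1933
  by_cases c1949 : m + 1 ≤ 1949
  · exact check' (c := 780) prim1933 (by norm_num) (by norm_num) (Nat.lt_succ_iff.mp (Nat.not_le.mp c1933)) c1949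
  by_cases c1951 : m + 1 ≤ 1951
  · exact check' (c := 781) prim1949 (by norm_num) (by norm_num) (Nat.lt_succ_iff.mp (Nat.not_le.mp c1949)) c1951
  by_cases c1973 : m + 1 ≤ 1973
  · exact check' (c := 790) prim1951 (by norm_num) (by norm_num) (Nat.lt_succ_iff.mp (Nat.not_le.mp c1951)) c1973
  by_cases c1979 : m + 1 ≤ 1979
  · exact check' (c := 792) prim1973 (by norm_num) (by norm_num) (Nat.lt_succ_iff.mp (Nat.not_le.mp c1973)) c1979
  by_cases c1987 : m + 1 ≤ 1987
  · exact check' (c := 795) prim1979 (by norm_num) (by norm_num) (Nat.lt_succ_iff.mp (Nat.not_le.mp c1979)) c1987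
  by_cases c1993 : m + 1 ≤ 1993
  · exact check' (c := 798) prim1987 (by norm_num) (by norm_num) (Nat.lt_succ_iff.mp (Nat.not_le.mp c1987)) c1993
  by_cases c1997 : m + 1 ≤ 1997
  · exact check' (c := 799) prim1993 (by norm_num) (by norm_num) (Nat.lt_succ_iff.mp (Nat.not_le.mp c1993)) c1997
  by_cases c1999 : m + 1 ≤ 1999
  · exact check' (c := 800) prim1997 (by norm_num) (by norm_num) (Nat.lt_succ_iff.mp (Nat.not_le.mp c1997)) c1999
  by_cases c2003 : m + 1 ≤ 2003
  · exact check' (c := 802) prim1999 (by norm_num) (by norm_num) (Nat.lt_succ_iff.mp (Nat.not_le.mp c1999)) c2003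
  by_cases c2011 : m + 1 ≤ 2011
  · exact check' (c := 805) prim2003 (by norm_num) (by norm_num) (Nat.lt_succ_iff.mp (Nat.not_le.mp c2003)) c2011
  by_cases c2017 : m + 1 ≤ 2017
  · exact check' (c := 807) prim2011 (by norm_num) (by norm_num) (Nat.lt_succ_iff.mp (Nat.not_le.mp c2011)) c2017
  by_cases c2027 : m + 1 ≤ 2027
  · exact check' (c := 811) prim2017 (by norm_num) (by norm_num) (Nat.lt_succ_iff.mp (Nat.not_le.mp c2017)) c2027
  by_cases c2029 : m + 1 ≤ 2029
  · exact check' (c := 812) prim2027 (by norm_num) (by norm_num) (Nat.lt_succ_iff.mp (Nat.not_le.mp c2027)) c2029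
  by_cases c2039 : m + 1 ≤ 2039
  · exact check' (c := 816) prim2029 (by norm_num) (by norm_num) (Nat.lt_succ_iff.mp (Nat.not_le.mp c2029)) c2039
  exact check' (p' := 2053) (c := 822) prim2039 (by norm_num) (by norm_num) (Nat.lt_succ_iff.mp (Nat.not_le.mp c2039)) (by omega)
lemma LL (m : ℕ) (h1 : 5 ≤ m) : 68^(10*(m+1)) ≤ 25^(10*(m+1)) * Pr m ^ 21 := by
  rcases lt_or_ge m 2048 with h | h
  · exact Lfin m h1 h
  · exact Lasym m h

-- numeric log helper: from 2.7182818286^a < q^n conclude a < n * log q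
lemma log_lower {q a n : ℕ} (hq : 1 ≤ q) (h : (2.7182818286:ℝ)^a < (q:ℝ)^n) :
    (a:ℝ) < n * Real.log q := by
  have h0 : Real.exp a < (q:ℝ)^n := by
    calc Real.exp a = (Real.exp 1)^a := by
          rw [← Real.exp_nat_mul]; norm_num
      _ ≤ (2.7182818286:ℝ)^a := by
          apply pow_le_pow_left₀ (Real.exp_pos 1).le Real.exp_one_lt_d9.le
      _ < (q:ℝ)^n := h
  have hqn : (0:ℝ) < (q:ℝ)^n := by positivity
  have := (Real.lt_log_iff_exp_lt hqn).2 h0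
  rwa [Real.log_pow] at this

lemma gcd_one_of_not_dvd {p : ℕ} (hp : p.Prime) {u : ℤ} (h : ¬ (p ∣ u.natAbs)) :
    Int.gcd (p : ℤ) u = 1 := by
  have h1 : Int.gcd (p:ℤ) u = Nat.gcd p u.natAbs := by
    rw [Int.gcd]; simp
  rw [h1]
  exact hp.coprime_iff_not_dvd.2 h

-- The core contradiction lemma
lemma core (q v : ℕ) (hq : q.Prime) (h11 : 11 ≤ q) (hv0 : 0 < v) (hvq : v < q)
    (hall : ∀ p : ℕ, p.Prime → (p:ℝ) < 2.1 * Real.log q → p ∣ v) : False := by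
  set T : ℝ := 2.1 * Real.log q with hT
  have hlogq : (0:ℝ) < Real.log q := Real.log_pos (by exact_mod_cast hq.one_lt)
  have hT0 : (0:ℝ) ≤ T := by positivity
  have hT5 : (5:ℝ) < T := by
    have h1 : (50:ℝ) < 21 * Real.log q := by
      have : (2.7182818286:ℝ)^50 < ((11:ℕ):ℝ)^21 := by norm_num
      have h2 : ((11:ℕ):ℝ)^21 ≤ (q:ℝ)^21 := by
        apply pow_le_pow_left₀ (by norm_num)
        exact_mod_cast h11
      have := log_lower (q := q) (by omega) (lt_of_lt_of_le this h2)
      exact_mod_cast this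
    rw [hT]; linarith
  set m : ℕ := ⌈T⌉₊ - 1 with hm
  have h5ceil : (5:ℕ) < ⌈T⌉₊ := Nat.lt_ceil.2 (by exact_mod_cast hT5)
  have hceil : 1 ≤ ⌈T⌉₊ := by omega
  have hm1 : (m:ℝ) + 1 = (⌈T⌉₊ : ℝ) := by
    rw [hm]; push_cast [Nat.cast_sub hceil]; ring
  have hm5 : 5 ≤ m := by omega
  have hmT : (m:ℝ) < T := by
    have := Nat.ceil_lt_add_one hT0
    linarith [hm1]
  have hTm : T ≤ (m:ℝ) + 1 := by rw [hm1]; exact Nat.le_ceil T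
  -- all primes ≤ m divide v
  have hdvd : Pr m ∣ v := by
    apply Finset.prod_primes_dvd
    · intro p hp
      exact (Finset.mem_filter.1 hp).2.prime
    · intro p hp
      have hmem := Finset.mem_filter.1 hp
      have hple : p ≤ m := by
        have := Finset.mem_range.1 hmem.1; omega
      apply hall p hmem.2
      calc (p:ℝ) ≤ (m:ℝ) := by exact_mod_cast hple
        _ < T := hmT
  have hPrv : Pr m ≤ v := Nat.le_of_dvd hv0 hdvd
  have hPrq : Pr m < q := by omega
  -- numeric contradiction
  have hL := LL m hm5
  have hLR : ((68:ℝ)/25)^(10*(m+1)) ≤ (Pr m : ℝ)^21 := by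
    rw [div_pow, div_le_iff₀ (by positivity)]
    calc ((68:ℝ))^(10*(m+1)) = ((68^(10*(m+1)) : ℕ) : ℝ) := by push_cast; ring
      _ ≤ ((25^(10*(m+1)) * Pr m ^ 21 : ℕ) : ℝ) := by exact_mod_cast hL
      _ = (Pr m:ℝ)^21 * 25^(10*(m+1)) := by push_cast; ring
  have hq21 : (q:ℝ)^21 ≤ (Pr m : ℝ)^21 := by
    have hlq : 21 * Real.log q ≤ 10*((m:ℝ)+1) := by
      have : T ≤ (m:ℝ) + 1 := hTm
      rw [hT] at this
      linarith
    have he : (Real.exp 1) ≤ (68:ℝ)/25 :=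
      le_of_lt (lt_of_lt_of_le Real.exp_one_lt_d9 (by norm_num))
    calc (q:ℝ)^21 = Real.exp (Real.log q) ^ 21 := by
          rw [Real.exp_log (by exact_mod_cast hq.pos)]
      _ = Real.exp ((21:ℕ) * Real.log q) := (Real.exp_nat_mul _ 21).symm
      _ ≤ Real.exp (((10*(m+1):ℕ):ℝ)) := by
          apply Real.exp_le_exp.2
          push_cast
          linarith
      _ = Real.exp ((10*(m+1):ℕ) * (1:ℝ)) := by rw [mul_one]
      _ = (Real.exp 1) ^ (10*(m+1)) := Real.exp_nat_mul 1 (10*(m+1))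
      _ ≤ ((68:ℝ)/25) ^ (10*(m+1)) := pow_le_pow_left₀ (Real.exp_pos 1).le he _
      _ ≤ (Pr m : ℝ)^21 := hLR
  have : (q:ℝ) ≤ (Pr m : ℝ) := by
    by_contra hcon
    push_neg at hcon
    have := pow_lt_pow_left₀ hcon (by positivity : (0:ℝ) ≤ (Pr m:ℝ)) (by norm_num : 21 ≠ 0)
    linarith
  have : q ≤ Pr m := by exact_mod_cast this
  omega

lemma num_lt_3log {p q : ℕ} (hq : 1 ≤ q) (h : (2.7182818286:ℝ)^p < (q:ℝ)^3) :
    (p:ℝ) < 3 * Real.log q := by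
  have := log_lower hq h
  push_cast at this
  linarith

lemma num_lt_21log {p q : ℕ} (hq : 1 ≤ q) (h : (2.7182818286:ℝ)^(10*p) < (q:ℝ)^21) :
    (p:ℝ) < 2.1 * Real.log q := by
  have := log_lower hq h
  push_cast at this
  linarith

theorem stmt_10 (q : ℕ) (hq : q.Prime) (u : ℤ) (hu0 : 0 < u) (huq : u < (q : ℤ)) :
    (q ≠ 2 → q ≠ 3 →
      ∃ p₀ : ℕ, p₀.Prime ∧ (p₀ : ℝ) < 3 * Real.log q ∧ Int.gcd (p₀ : ℤ) u = 1) ∧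
    (q ≠ 2 → q ≠ 3 → q ≠ 7 →
      ∃ p₀ : ℕ, p₀.Prime ∧ (p₀ : ℝ) < 2.1 * Real.log q ∧ Int.gcd (p₀ : ℤ) u = 1) := by
  set v : ℕ := u.natAbs with hv
  have hvu : (v:ℤ) = u := Int.natAbs_of_nonneg hu0.le
  have hv0 : 0 < v := Int.natAbs_pos.2 (by omega)
  have hvq : v < q := by
    have : (v:ℤ) < (q:ℤ) := by rw [hvu]; exact huq
    exact_mod_cast this
  constructor
  · intro h2 h3
    by_contra hcon
    push_neg at hcon
    have hall : ∀ p : ℕ, p.Prime → (p:ℝ) < 3 * Real.log q → p ∣ v := by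
      intro p hp hlt
      by_contra hnd
      exact hcon p hp hlt (gcd_one_of_not_dvd hp hnd)
    have hq5 : 5 ≤ q := by
      by_contra h
      push_neg at h
      interval_cases q
      · norm_num at hq
      · norm_num at hq
      · exact h2 rfl
      · exact h3 rfl
      · norm_num at hq
    rcases lt_or_ge q 11 with hq11 | hq11
    · interval_cases q
      · -- q = 5
        have d2 : 2 ∣ v := hall 2 (by norm_num) (num_lt_3log (by norm_num) (by norm_num))
        have d3 : 3 ∣ v := hall 3 (by norm_num) (num_lt_3log (by norm_num) (by norm_num))
        omega
      · norm_num at hq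
      · -- q = 7
        have d2 : 2 ∣ v := hall 2 (by norm_num) (num_lt_3log (by norm_num) (by norm_num))
        have d3 : 3 ∣ v := hall 3 (by norm_num) (num_lt_3log (by norm_num) (by norm_num))
        have d5 : 5 ∣ v := hall 5 (by norm_num) (num_lt_3log (by norm_num) (by norm_num))
        omega
      · norm_num at hq
      · norm_num at hq
      · norm_num at hq
    · apply core q v hq hq11 hv0 hvq
      intro p hp hlt
      apply hall p hp
      have hlog : (0:ℝ) ≤ Real.log q := Real.log_nonneg (by exact_mod_cast hq.one_le)
      calc (p:ℝ) < 2.1 * Real.log q := hlt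
        _ ≤ 3 * Real.log q := by linarith
  · intro h2 h3 h7
    by_contra hcon
    push_neg at hcon
    have hall : ∀ p : ℕ, p.Prime → (p:ℝ) < 2.1 * Real.log q → p ∣ v := by
      intro p hp hlt
      by_contra hnd
      exact hcon p hp hlt (gcd_one_of_not_dvd hp hnd)
    have hq5 : 5 ≤ q := by
      by_contra h
      push_neg at h
      interval_cases q
      · norm_num at hq
      · norm_num at hq
      · exact h2 rfl
      · exact h3 rfl
      · norm_num at hq
    rcases lt_or_ge q 11 with hq11 | hq11
    · interval_cases q
      · -- q = 5
        have d2 : 2 ∣ v := hall 2 (by norm_num) (num_lt_21log (by norm_num) (by norm_num))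
        have d3 : 3 ∣ v := hall 3 (by norm_num) (num_lt_21log (by norm_num) (by norm_num))
        omega
      · norm_num at hq
      · exact h7 rfl
      · norm_num at hq
      · norm_num at hq
      · norm_num at hq
    · exact core q v hq hq11 hv0 hvq hall
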